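/- arXiv:1501.01230 — 5 statements merged into one kernel-verified Lean document; each statement's English description precedes it below -/
import Mathlib

section
/- Let f be an increasing real-valued function on [a,b] and ε > 0. Then there exist finitely many points h₁ = a < h₂ < ⋯ < h_k = b such that f(h_{j+1}−) − f(h_j+) ≤ ε for every j = 1, …, k−1, where f(t−) and f(t+) denote the left and right limits of f at t. -/
open MeasureTheory Set Filter Topology Metric ENNReal

noncomputable section

/-- Euclidean space `ℝⁿ`. -/
abbrev EucSp (n : ℕ) := EuclideanSpace ℝ (Fin n)

/-- The open unit cube `𝔾ⁿ = (0,1)ⁿ`. -/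
def Gcube (n : ℕ) : Set (EucSp n) := {x | ∀ j, x j ∈ Set.Ioo (0:ℝ) 1}

/-- A "basis mapping": to every point it assigns a family of sets. -/
abbrev BasisMap (n : ℕ) := EucSp n → Set (Set (EucSp n))

/-- `B` is a differentiation basis: every `R ∈ B(x)` is a bounded measurable set of positive
measure containing `x`, and `B(x)` contains sets of arbitrarily small diameter. -/
def IsDiffBasis {n : ℕ} (B : BasisMap n) : Prop :=
  ∀ x : EucSp n,
    (∀ R ∈ B x, x ∈ R ∧ Bornology.IsBounded R ∧ MeasurableSet R ∧ 0 < volume R) ∧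
    ∀ ε : ℝ, 0 < ε → ∃ R ∈ B x, Metric.diam R < ε

/-- Translation invariance: `B(x) = {x + I : I ∈ B(0)}`. -/
def IsTIBasis {n : ℕ} (B : BasisMap n) : Prop :=
  ∀ x : EucSp n, B x = (fun I => (fun y => x + y) '' I) '' B 0

/-- The truncated maximal operator `M_B^{(r)} f (x)`. -/
def maxTrunc {n : ℕ} (B : BasisMap n) (r : ℝ) (f : EucSp n → ℝ) (x : EucSp n) : ℝ≥0∞ :=
  ⨆ (R : Set (EucSp n)) (_ : R ∈ B x ∧ Metric.diam R < r),
    (∫⁻ y in R, ENNReal.ofReal |f y|) / volume R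

/-- The (untruncated) maximal operator `M_B f (x)`. -/
def maxOp {n : ℕ} (B : BasisMap n) (f : EucSp n → ℝ) (x : EucSp n) : ℝ≥0∞ :=
  ⨆ (R : Set (EucSp n)) (_ : R ∈ B x), (∫⁻ y in R, ENNReal.ofReal |f y|) / volume R

/-- The upper derivative `D̄_B(∫f, x)` equals `+∞`. -/
def upperDerivInfinite {n : ℕ} (B : BasisMap n) (f : EucSp n → ℝ) (x : EucSp n) : Prop :=
  ∀ M : ℝ, ∀ δ : ℝ, 0 < δ →
    ∃ R ∈ B x, Metric.diam R < δ ∧ M * (volume R).toReal < ∫ y in R, f y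

/-- The family `W_m` of dyadic intervals of order `m`. -/
def dyadicW {n : ℕ} (m : Fin n → ℕ) : Set (Set (EucSp n)) :=
  {S | ∃ k : Fin n → ℤ, S =
    {x : EucSp n | ∀ j, (k j : ℝ) / 2 ^ (m j) < x j ∧ x j < ((k j : ℝ) + 1) / 2 ^ (m j)}}

/-- The family `H_m` of all unions of dyadic intervals of order `m`. -/
def dyadicH {n : ℕ} (m : Fin n → ℕ) : Set (Set (EucSp n)) :=
  {S | ∃ T ⊆ dyadicW m, S = ⋃₀ T}

/-- `W_m* = {Q ∈ W_m : Q ⊆ 𝔾ⁿ}`. -/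
def dyadicWStar {n : ℕ} (m : Fin n → ℕ) : Set (Set (EucSp n)) :=
  {S | S ∈ dyadicW m ∧ S ⊆ Gcube n}

/-- `H_m* = {E ∈ H_m : E ⊆ 𝔾ⁿ}`. -/
def dyadicHStar {n : ℕ} (m : Fin n → ℕ) : Set (Set (EucSp n)) :=
  {S | S ∈ dyadicH m ∧ S ⊆ Gcube n}

/-- An (open) `n`-dimensional interval. -/
def IsOpenInterval {n : ℕ} (Q : Set (EucSp n)) : Prop :=
  ∃ a b : Fin n → ℝ, Q = {x : EucSp n | ∀ j, a j < x j ∧ x j < b j}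

/-- The function `h·χ_E`. -/
def indFun {n : ℕ} (E : Set (EucSp n)) (h : ℝ) : EucSp n → ℝ :=
  E.indicator fun _ => h

/-- The `M_Φ`-property with the given constants `c` and `c(·)`. -/
def MPhiPropertyWith {n : ℕ} (Λ : Set (BasisMap n)) (Φ : ℝ → ℝ) (c : ℝ) (ch : ℝ → ℝ) : Prop :=
  ∀ h : ℝ, 1 < h → ∀ ε : ℝ, 0 < ε →
    ∃ (E : Set (EucSp n)) (P : BasisMap n → Set (EucSp n)) (Q : Set (EucSp n)),
      MeasurableSet E ∧ 0 < volume E ∧ IsOpenInterval Q ∧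
      (∀ B ∈ Λ, P B ⊆ {x | 1 < maxTrunc B ε (indFun E h) x}) ∧
      (∃ m : Fin n → ℕ, ∀ B ∈ Λ, P B ∈ dyadicH m) ∧
      (∀ B ∈ Λ, ENNReal.ofReal (c * Φ h) * volume E ≤ volume (P B)) ∧
      E ⊆ Q ∧ (∀ B ∈ Λ, P B ⊆ Q) ∧ Metric.diam Q < ε ∧
      ENNReal.ofReal (ch h) * volume Q ≤ volume E

/-- The `M_Φ`-property. -/
def MPhiProperty {n : ℕ} (Λ : Set (BasisMap n)) (Φ : ℝ → ℝ) : Prop :=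
  ∃ c : ℝ, 0 < c ∧ ∃ ch : ℝ → ℝ, (∀ h : ℝ, 1 < h → ch h ∈ Set.Ioo (0:ℝ) 1) ∧
    MPhiPropertyWith Λ Φ c ch

/-- `f ∈ L(𝔾ⁿ)`: integrable and supported in the unit cube. -/
def MemL {n : ℕ} (f : EucSp n → ℝ) : Prop :=
  Integrable f ∧ {x | f x ≠ 0} ⊆ Gcube n

/-- `Φ` is non-regular: `limsup_{t→∞} Φ(t)/t = ∞`. -/
def NonRegular (Φ : ℝ → ℝ) : Prop :=
  ∀ M T : ℝ, ∃ t : ℝ, T < t ∧ 0 < t ∧ M * t < Φ t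

/-- `Φ` satisfies the `Δ₂`-condition at infinity. -/
def Delta2 (Φ : ℝ → ℝ) : Prop :=
  ∃ c τ : ℝ, 0 < c ∧ 0 < τ ∧ ∀ t : ℝ, τ < t → Φ (2 * t) ≤ c * Φ t

/-- The `γ`-rotated basis `B(γ)`. -/
def rotateBasis {n : ℕ} (B : BasisMap n) (γ : EucSp n ≃ₗᵢ[ℝ] EucSp n) : BasisMap n :=
  fun x => (fun R => (fun y => x + γ (y - x)) '' R) '' B x

/-- `γ` is a rotation (orientation-preserving linear isometry). -/
def IsRotation {n : ℕ} (γ : EucSp n ≃ₗᵢ[ℝ] EucSp n) : Prop :=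
  LinearMap.det (γ.toLinearEquiv : EucSp n →ₗ[ℝ] EucSp n) = 1

/-- The function `Φ_B(h) = lim_{t→∞} limsup_{r→0} |{M_B^{(tr)}(hχ_{V_r}) > 1}| / |V_r|`. -/
def PhiB {n : ℕ} (B : BasisMap n) (h : ℝ) : ℝ≥0∞ :=
  Filter.limsup (fun t : ℝ =>
    Filter.limsup (fun r : ℝ =>
      volume {x : EucSp n | 1 < maxTrunc B (t * r) (indFun (Metric.ball (0 : EucSp n) r) h) x}
        / volume (Metric.ball (0 : EucSp n) r)) (𝓝[>] (0:ℝ))) Filter.atTop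

/-- The basis `𝐈ₙᵏ` of intervals with at most `k` distinct edge lengths. -/
def baseInk (n k : ℕ) : BasisMap n := fun x =>
  {R | ∃ a b : Fin n → ℝ,
    R = {y : EucSp n | ∀ j, a j < y j ∧ y j < b j} ∧ (∀ j, a j < x j ∧ x j < b j) ∧
    (Finset.image (fun j => b j - a j) Finset.univ).card ≤ k}

/-- `f` belongs to the Orlicz class `ψ(L)(𝔾ⁿ)`. -/
def MemPsiL {n : ℕ} (ψ : ℝ → ℝ) (f : EucSp n → ℝ) : Prop :=
  Measurable f ∧ {x | f x ≠ 0} ⊆ Gcube n ∧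
    ∫⁻ x in {x | f x ≠ 0}, ENNReal.ofReal (ψ |f x|) < ⊤

/-- The Luxemburg distance on `ψ(L)(𝔾ⁿ)`. -/
def luxDist {n : ℕ} (ψ : ℝ → ℝ) (f g : EucSp n → ℝ) : ℝ :=
  sInf {lam : ℝ | 0 < lam ∧
    ∫⁻ x in {x | f x ≠ g x}, ENNReal.ofReal (ψ (|f x - g x| / lam)) ≤ 1}

/-- `f ∈ S_{Δ(B)}`: an integrable function supported in `𝔾ⁿ` whose integral has upper
derivative `+∞` a.e. on `𝔾ⁿ` with respect to every rotation of `B`. -/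
def MemSDeltaB {n : ℕ} (B : BasisMap n) (f : EucSp n → ℝ) : Prop :=
  Integrable f ∧ {x | f x ≠ 0} ⊆ Gcube n ∧
    ∀ γ : EucSp n ≃ₗᵢ[ℝ] EucSp n, IsRotation γ →
      ∀ᵐ x ∂(volume : Measure (EucSp n)), x ∈ Gcube n →
        upperDerivInfinite (rotateBasis B γ) f x

/-- `T` is of the first Baire category in the space `ψ(L)(𝔾ⁿ)` with the Luxemburg metric:
`T` is a countable union of sets `F k`, each of which is nowhere dense (every ball of the
space contains a ball disjoint from `F k`). -/
def FirstCategoryInPsiL {n : ℕ} (ψ : ℝ → ℝ) (T : Set (EucSp n → ℝ)) : Prop :=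
  ∃ F : ℕ → Set (EucSp n → ℝ), T ⊆ (⋃ k, F k) ∧
    ∀ k : ℕ, ∀ f : EucSp n → ℝ, MemPsiL ψ f → ∀ ε : ℝ, 0 < ε →
      ∃ g : EucSp n → ℝ, MemPsiL ψ g ∧ luxDist ψ f g < ε ∧
        ∃ δ : ℝ, 0 < δ ∧ ∀ u : EucSp n → ℝ, MemPsiL ψ u → luxDist ψ g u < δ → u ∉ F k


section myAux
open Function

variable {f : ℝ → ℝ} {a b : ℝ}

private lemma myTendstoLeft (hab : a < b) (hf : MonotoneOn f (Set.Icc a b)) {x : ℝ}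
    (hx : x ∈ Set.Ioc a b) : Tendsto f (𝓝[<] x) (𝓝 (Function.leftLim f x)) := by
  have hne : (Ioo a x).Nonempty := nonempty_Ioo.2 hx.1
  have hsub : Ioo a x ⊆ Icc a b := fun u hu => ⟨hu.1.le, hu.2.le.trans hx.2⟩
  have hmono : MonotoneOn f (Ioo a x) := hf.mono hsub
  have hbdd : BddAbove (f '' Ioo a x) := by
    refine ⟨f b, ?_⟩
    rintro _ ⟨u, hu, rfl⟩
    exact hf (hsub hu) ⟨hab.le, le_rfl⟩ (hu.2.le.trans hx.2)
  have hT := MonotoneOn.tendsto_nhdsWithin_Ioo_left hne hmono hbdd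
  have : Function.leftLim f x = sSup (f '' Ioo a x) :=
    leftLim_eq_of_tendsto hT
  rwa [this]

private lemma myTendstoRight (hab : a < b) (hf : MonotoneOn f (Set.Icc a b)) {x : ℝ}
    (hx : x ∈ Set.Ico a b) : Tendsto f (𝓝[>] x) (𝓝 (Function.rightLim f x)) := by
  have hne : (Ioo x b).Nonempty := nonempty_Ioo.2 hx.2
  have hsub : Ioo x b ⊆ Icc a b := fun u hu => ⟨hx.1.trans hu.1.le, hu.2.le⟩
  have hmono : MonotoneOn f (Ioo x b) := hf.mono hsub
  have hbdd : BddBelow (f '' Ioo x b) := by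
    refine ⟨f a, ?_⟩
    rintro _ ⟨u, hu, rfl⟩
    exact hf ⟨le_rfl, hab.le⟩ (hsub hu) (hx.1.trans hu.1.le)
  have hT := MonotoneOn.tendsto_nhdsWithin_Ioo_right hne hmono hbdd
  have : Function.rightLim f x = sInf (f '' Ioo x b) :=
    rightLim_eq_of_tendsto hT
  rwa [this]

private lemma myLeftLim_le (hab : a < b) (hf : MonotoneOn f (Set.Icc a b)) {x s : ℝ}
    (hx : x ∈ Set.Ioc a b) (hs : s ∈ Set.Icc a b) (hxs : x ≤ s) :
    Function.leftLim f x ≤ f s := by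
  refine le_of_tendsto (myTendstoLeft hab hf hx) ?_
  filter_upwards [Ioo_mem_nhdsLT hx.1] with u hu
  exact hf ⟨hu.1.le, hu.2.le.trans hx.2⟩ hs (hu.2.le.trans hxs)

private lemma myLe_rightLim (hab : a < b) (hf : MonotoneOn f (Set.Icc a b)) {x : ℝ}
    (hx : x ∈ Set.Ico a b) : f x ≤ Function.rightLim f x := by
  refine ge_of_tendsto (myTendstoRight hab hf hx) ?_
  filter_upwards [Ioo_mem_nhdsGT hx.2] with u hu
  exact hf ⟨hx.1, hx.2.le⟩ ⟨hx.1.trans hu.1.le, hu.2.le⟩ hu.1.le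

private def myGood (f : ℝ → ℝ) (a ε t : ℝ) : Prop :=
  ∃ (k : ℕ) (h : Fin (k + 1) → ℝ), StrictMono h ∧ h 0 = a ∧ h (Fin.last k) = t ∧
    ∀ j : Fin k, Function.leftLim f (h j.succ) - Function.rightLim f (h j.castSucc) ≤ ε

private lemma myGood_extend {ε t s : ℝ} (ht : myGood f a ε t) (hts : t < s)
    (hjump : Function.leftLim f s - Function.rightLim f t ≤ ε) : myGood f a ε s := by
  obtain ⟨k, h, hm, h0, hl, hc⟩ := ht
  refine ⟨k + 1, Fin.snoc h s, ?_, ?_, ?_, ?_⟩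
  · rw [Fin.strictMono_iff_lt_succ]
    intro i
    rw [Fin.snoc_castSucc]
    by_cases hi : i = Fin.last k
    · subst hi
      rw [Fin.succ_last, Fin.snoc_last, hl]
      exact hts
    · obtain ⟨j, rfl⟩ := Fin.exists_castSucc_eq.2 hi
      rw [Fin.succ_castSucc, Fin.snoc_castSucc]
      exact hm (Fin.castSucc_lt_succ (i := j))
  · rw [show (0 : Fin (k + 2)) = Fin.castSucc 0 from rfl, Fin.snoc_castSucc, h0]
  · rw [Fin.snoc_last]
  · intro j
    by_cases hj : j = Fin.last k
    · subst hj
      rw [Fin.succ_last, Fin.snoc_last, Fin.snoc_castSucc, hl]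
      exact hjump
    · obtain ⟨i, rfl⟩ := Fin.exists_castSucc_eq.2 hj
      rw [Fin.succ_castSucc, Fin.snoc_castSucc, Fin.snoc_castSucc]
      exact hc i

end myAux

theorem stmt3 (f : ℝ → ℝ) (a b : ℝ) (hab : a < b) (hf : MonotoneOn f (Set.Icc a b))
    (ε : ℝ) (hε : 0 < ε) :
    ∃ (k : ℕ) (h : Fin (k + 1) → ℝ), StrictMono h ∧ h 0 = a ∧ h (Fin.last k) = b ∧
      ∀ j : Fin k, Function.leftLim f (h j.succ) - Function.rightLim f (h j.castSucc) ≤ ε := by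
  set S : Set ℝ := {t | t ∈ Set.Icc a b ∧ myGood f a ε t} with hS
  have haS : a ∈ S := by
    refine ⟨⟨le_rfl, hab.le⟩, 0, fun _ => a, @Subsingleton.strictMono _ _ _ _ (by exact Fin.subsingleton_one) _, rfl, rfl, Fin.elim0⟩
  have hbdd : BddAbove S := ⟨b, fun t ht => ht.1.2⟩
  set c : ℝ := sSup S with hc
  have hca : a ≤ c := le_csSup hbdd haS
  have hcb : c ≤ b := csSup_le ⟨a, haS⟩ fun t ht => ht.1.2
  -- Step 1 : c ∈ S
  have hcS : c ∈ S := by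
    rcases eq_or_lt_of_le hca with h | hac
    · rwa [← h]
    · set L := Function.leftLim f c with hL
      have hT := myTendstoLeft hab hf ⟨hac, hcb⟩
      have hev : ∀ᶠ u in 𝓝[<] c, L - ε < f u :=
        hT.eventually (eventually_gt_nhds (by linarith))
      have hev2 : ∀ᶠ u in 𝓝[<] c, u ∈ Ioo a c := Ioo_mem_nhdsLT hac
      obtain ⟨l, hl, hsub⟩ := mem_nhdsLT_iff_exists_Ioo_subset.1 (hev.and hev2)
      obtain ⟨t, htS, hlt⟩ := exists_lt_of_lt_csSup ⟨a, haS⟩ (show max l a < c from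
        max_lt hl (by exact hac))
      have htc : t ≤ c := le_csSup hbdd htS
      rcases eq_or_lt_of_le htc with h | htc
      · rwa [← h]
      · have htE := hsub ⟨lt_of_le_of_lt (le_max_left l a) hlt, htc⟩
        refine ⟨⟨hca, hcb⟩, myGood_extend htS.2 htc ?_⟩
        have h1 : f t ≤ Function.rightLim f t :=
          myLe_rightLim hab hf ⟨htS.1.1, lt_of_lt_of_le htc hcb⟩
        have h2 : L - ε < f t := htE.1
        linarith
  -- Step 2 : c = b
  have hcb' : c = b := by
    by_contra hne
    have hcb2 : c < b := lt_of_le_of_ne hcb hne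
    set R := Function.rightLim f c with hR
    have hT := myTendstoRight hab hf ⟨hca, hcb2⟩
    have hev : ∀ᶠ u in 𝓝[>] c, f u < R + ε :=
      hT.eventually (eventually_lt_nhds (by linarith))
    have hev2 : ∀ᶠ u in 𝓝[>] c, u ∈ Ioo c b := Ioo_mem_nhdsGT hcb2
    obtain ⟨s, hs1, hs2⟩ := (hev.and hev2).exists
    have hsS : s ∈ S := by
      refine ⟨⟨hca.trans hs2.1.le, hs2.2.le⟩, myGood_extend hcS.2 hs2.1 ?_⟩
      have h1 : Function.leftLim f s ≤ f s :=
        myLeftLim_le hab hf ⟨lt_of_le_of_lt hca hs2.1, hs2.2.le⟩ ⟨hca.trans hs2.1.le, hs2.2.le⟩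
          le_rfl
      linarith
    exact absurd (le_csSup hbdd hsS) (not_le.2 hs2.1)
  exact hcb' ▸ hcS.2

end
end

section
/- Let n ≥ 2, let Φ : (0,∞) → (0,∞) be an increasing function, let f ∈ L(𝔾ⁿ), let k ∈ ℕ with f/k ∉ Φ(L)(𝔾ⁿ), and let α : (1,∞) → (0,∞). Then there exist measurable sets A₁, …, A_m ⊂ 𝔾ⁿ and numbers h₁, …, h_m such that: (1) A_j ∩ A_i = ∅ for i ≠ j; (2) k < h_j ≤ |f(x)| for every j and every x ∈ A_j; (3) 0 < |A_j| ≤ α(h_j/k) for every j; (4) Σ_{j=1}^m Φ(h_j/k)·|A_j| > k. -/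
open MeasureTheory Set Filter Topology Metric ENNReal

noncomputable section

/-- Upper sets in ℝ are measurable. -/
lemma upperSet_measurableSet {A : Set ℝ} (hA : ∀ ⦃s t : ℝ⦄, s ∈ A → s ≤ t → t ∈ A) :
    MeasurableSet A := by
  rcases A.eq_empty_or_nonempty with h | hne
  · simp [h]
  by_cases hbd : BddBelow A
  · by_cases hmem : sInf A ∈ A
    · have : A = Set.Ici (sInf A) :=
        subset_antisymm (fun t ht => csInf_le hbd ht) (fun t ht => hA hmem ht)
      rw [this]; exact measurableSet_Ici
    · have : A = Set.Ioi (sInf A) := by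
        apply subset_antisymm
        · intro t ht
          refine lt_of_le_of_ne (csInf_le hbd ht) ?_
          intro hEq; rw [hEq] at hmem; exact hmem ht
        · intro t ht
          obtain ⟨u, huA, hu⟩ := (csInf_lt_iff hbd hne).mp ht
          exact hA huA hu.le
      rw [this]; exact measurableSet_Ioi
  · have : A = Set.univ := by
      apply Set.eq_univ_of_forall
      intro t
      obtain ⟨u, huA, hu⟩ := not_bddBelow_iff.mp hbd t
      exact hA huA hu.le
    rw [this]; exact MeasurableSet.univ

/-- The unit cube has finite volume. -/
lemma gcube_volume_lt_top {n : ℕ} : volume (Gcube n) < ⊤ := by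
  have hsub : Gcube n ⊆ Metric.closedBall (0 : EucSp n) (Real.sqrt n) := by
    intro x hx
    rw [Metric.mem_closedBall, dist_zero_right, EuclideanSpace.norm_eq]
    apply Real.sqrt_le_sqrt
    calc ∑ i, ‖x i‖ ^ 2 ≤ ∑ _i : Fin n, (1:ℝ) := by
          apply Finset.sum_le_sum
          intro i _
          have h1 := (hx i).1
          have h2 := (hx i).2
          have : ‖x i‖ ≤ 1 := by rw [Real.norm_eq_abs, abs_le]; constructor <;> linarith
          calc ‖x i‖ ^ 2 ≤ 1 ^ 2 := by
                apply pow_le_pow_left₀ (norm_nonneg _) this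
            _ = 1 := one_pow 2
      _ = n := by simp
  exact lt_of_le_of_lt (measure_mono hsub) measure_closedBall_lt_top

/-- Core selection lemma. -/
lemma core_select {α : Type*} [MeasurableSpace α] (μ : Measure α) (Φ : ℝ → ℝ)
    (hΦ : MonotoneOn Φ (Set.Ioi 0)) {F : α → ℝ} (hF : Measurable F) (c : ℝ)
    {S : Set α} (hS : MeasurableSet S) (hS0 : μ S ≠ 0) (hSfin : μ S ≠ ⊤)
    (hmem : ∀ x ∈ S, 2 < F x ∧ c < Φ (F x)) :
    ∃ (h : ℝ) (S' : Set α), MeasurableSet S' ∧ S' ⊆ S ∧ 2 < h ∧ (∀ x ∈ S', h ≤ F x) ∧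
      c < Φ h ∧ μ S' ≠ 0 ∧ μ S ≤ 4 * μ S' := by
  obtain ⟨x₀, hx₀⟩ : S.Nonempty := nonempty_of_measure_ne_zero hS0
  set T := {t : ℝ | 2 < t ∧ c < Φ t} with hT
  have hTne : F x₀ ∈ T := ⟨(hmem _ hx₀).1, (hmem _ hx₀).2⟩
  have hbdd : BddBelow T := ⟨2, fun t ht => ht.1.le⟩
  set a := sInf T with ha
  have ha2 : 2 ≤ a := le_csInf ⟨_, hTne⟩ fun t ht => ht.1.le
  have haF : ∀ x ∈ S, a ≤ F x := fun x hx => csInf_le hbdd ⟨(hmem x hx).1, (hmem x hx).2⟩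
  have hΦa : ∀ δ : ℝ, 0 < δ → c < Φ (a + δ) := by
    intro δ hδ
    obtain ⟨t, htT, htlt⟩ := (csInf_lt_iff hbdd ⟨_, hTne⟩).mp (show sInf T < a + δ by linarith)
    refine htT.2.trans_le (hΦ ?_ ?_ htlt.le)
    · exact lt_trans two_pos htT.1
    · have : (0:ℝ) < 2 := two_pos
      simp only [Set.mem_Ioi]; linarith
  set S₁ := S ∩ F ⁻¹' {a} with hS₁
  set S₂ := S ∩ F ⁻¹' (Set.Ioi a) with hS₂
  have hm₁ : MeasurableSet S₁ := hS.inter (hF (measurableSet_singleton a))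
  have hm₂ : MeasurableSet S₂ := hS.inter (hF measurableSet_Ioi)
  have hcover : S = S₁ ∪ S₂ := by
    apply subset_antisymm
    · intro x hx
      rcases eq_or_lt_of_le (haF x hx) with h | h
      · exact Or.inl ⟨hx, h.symm⟩
      · exact Or.inr ⟨hx, h⟩
    · exact Set.union_subset Set.inter_subset_left Set.inter_subset_left
  have hsum : μ S ≤ μ S₁ + μ S₂ := hcover ▸ measure_union_le _ _
  have hfin₁ : μ S₁ ≠ ⊤ :=
    ((measure_mono (Set.inter_subset_left : S₁ ⊆ S)).trans_lt (lt_top_iff_ne_top.mpr hSfin)).ne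
  have hfin₂ : μ S₂ ≠ ⊤ :=
    ((measure_mono (Set.inter_subset_left : S₂ ⊆ S)).trans_lt (lt_top_iff_ne_top.mpr hSfin)).ne
  by_cases hc : μ S ≤ 2 * μ S₁
  · -- Case A: the level set {F = a} carries at least half the measure
    have h1 : μ S₁ ≠ 0 := by
      intro h0; rw [h0, mul_zero] at hc
      exact hS0 (le_antisymm hc bot_le)
    obtain ⟨x₁, hx₁⟩ : S₁.Nonempty := nonempty_of_measure_ne_zero h1
    have hFa : F x₁ = a := hx₁.2
    refine ⟨a, S₁, hm₁, Set.inter_subset_left, ?_, ?_, ?_, h1, ?_⟩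
    · rw [← hFa]; exact (hmem _ hx₁.1).1
    · intro x hx; exact (hx.2 : F x = a).ge
    · rw [← hFa]; exact (hmem _ hx₁.1).2
    · refine hc.trans ?_
      exact mul_le_mul_left (by norm_num) _
  · -- Case B
    push_neg at hc
    have hlt₂ : μ S < 2 * μ S₂ := by
      have hfS : μ S ≠ ⊤ := hSfin
      rw [← ENNReal.toReal_lt_toReal hfS (by finiteness)]
      rw [← ENNReal.toReal_lt_toReal (by finiteness) hfS] at hc
      have hsum' : (μ S).toReal ≤ (μ S₁).toReal + (μ S₂).toReal := by
        rw [← ENNReal.toReal_add hfin₁ hfin₂]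
        exact ENNReal.toReal_mono (by finiteness) hsum
      rw [ENNReal.toReal_mul] at hc ⊢
      simp only [ENNReal.toReal_ofNat] at hc ⊢
      linarith
    set g : ℕ → Set α := fun m => S ∩ F ⁻¹' (Set.Ici (a + 1 / (m + 1))) with hg
    have hgm : ∀ m, MeasurableSet (g m) := fun m => hS.inter (hF measurableSet_Ici)
    have hmono : Monotone g := by
      intro m m' hmm x hx
      simp only [hg, Set.mem_inter_iff, Set.mem_preimage, Set.mem_Ici] at hx ⊢
      have h1 : (0:ℝ) < m + 1 := by positivity
      have h2 : (m:ℝ) + 1 ≤ m' + 1 := by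
        have := (Nat.cast_le (α := ℝ)).mpr hmm; linarith
      have := one_div_le_one_div_of_le h1 h2
      exact ⟨hx.1, by linarith [hx.2]⟩
    have hU : S₂ = ⋃ m, g m := by
      apply subset_antisymm
      · intro x hx
        have hx2 : a < F x := hx.2
        obtain ⟨m, hm⟩ := exists_nat_one_div_lt (show (0:ℝ) < F x - a from sub_pos.mpr hx2)
        refine Set.mem_iUnion.mpr ⟨m, hx.1, ?_⟩
        simp only [Set.mem_preimage, Set.mem_Ici]
        linarith
      · refine Set.iUnion_subset fun m x hx => ⟨hx.1, ?_⟩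
        have hx2 : a + 1/(m+1) ≤ F x := hx.2
        have hp : (0:ℝ) < 1/(m+1) := by positivity
        simp only [Set.mem_preimage, Set.mem_Ioi]
        linarith
    have hS₂sup : μ S₂ = ⨆ m, μ (g m) := by
      rw [hU]; exact hmono.measure_iUnion
    have hlt : μ S < ⨆ m, 2 * μ (g m) := by
      rw [← ENNReal.mul_iSup, ← hS₂sup]; exact hlt₂
    obtain ⟨m, hm⟩ := lt_iSup_iff.mp hlt
    have hmδ : (0:ℝ) < 1 / (m + 1) := by positivity
    refine ⟨a + 1/(m+1), g m, hgm m, Set.inter_subset_left, by linarith, ?_, hΦa _ hmδ, ?_, ?_⟩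
    · intro x hx; exact hx.2
    · intro h0; rw [h0, mul_zero] at hm; exact absurd hm (by simp)
    · calc μ S ≤ 2 * μ (g m) := hm.le
        _ ≤ 4 * μ (g m) := mul_le_mul_left (by norm_num) _

set_option maxHeartbeats 1000000 in
/-- Subdivision of a subset of the unit cube into pieces of small positive measure. -/
lemma subdiv {n : ℕ} (hn1 : 1 ≤ n) {s : Set (EucSp n)} (hs : MeasurableSet s)
    (hsub : s ⊆ Gcube n) (a : ℝ) (ha : 0 < a) :
    ∃ (m : ℕ) (B : Fin m → Set (EucSp n)),
      (∀ i, MeasurableSet (B i) ∧ B i ⊆ s ∧ volume (B i) ≠ 0 ∧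
        volume (B i) ≤ ENNReal.ofReal a) ∧
      (∀ i j, i ≠ j → B i ∩ B j = ∅) ∧ ∑ i, volume (B i) = volume s := by
  classical
  obtain ⟨p, hp⟩ : ∃ p : ℕ, (1:ℝ)/2^p ≤ a := by
    obtain ⟨p, hp⟩ := exists_pow_lt_of_lt_one ha (show (1:ℝ)/2 < 1 by norm_num)
    exact ⟨p, by rw [div_pow, one_pow] at hp; exact hp.le⟩
  have h2p : (0:ℝ) < 2 ^ p := by positivity
  set cell : (Fin n → Fin (2^p)) → Set (EucSp n) := fun z =>
    {x | ∀ i, ((z i : ℕ) : ℝ)/2^p ≤ x i ∧ x i < (((z i : ℕ) : ℝ)+1)/2^p} with hcell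
  have hcellmeas : ∀ z, MeasurableSet (cell z) := by
    intro z
    have : cell z = ⋂ i, (fun x : EucSp n => x i) ⁻¹'
        (Set.Ico (((z i : ℕ) : ℝ)/2^p) ((((z i : ℕ) : ℝ)+1)/2^p)) := by
      ext x
      simp [hcell, Set.mem_Ico]
    rw [this]
    refine MeasurableSet.iInter fun i => ?_
    have hco : Measurable (fun x : EucSp n => x i) :=
      (measurable_pi_apply i).comp (MeasurableEquiv.toLp 2 (Fin n → ℝ)).symm.measurable
    exact hco measurableSet_Ico
  have hcellvol : ∀ z, volume (cell z) ≤ ENNReal.ofReal a := by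
    intro z
    have hme := EuclideanSpace.volume_preserving_symm_measurableEquiv_toLp (Fin n)
    have hpre : cell z = (MeasurableEquiv.toLp 2 (Fin n → ℝ)).symm ⁻¹'
        (Set.univ.pi fun i => Set.Ico (((z i : ℕ) : ℝ)/2^p) ((((z i : ℕ) : ℝ)+1)/2^p)) := by
      ext x
      simp [hcell, Set.mem_pi, Set.mem_Ico]
    rw [hpre, hme.measure_preimage ((MeasurableSet.univ_pi fun i =>
      measurableSet_Ico).nullMeasurableSet)]
    rw [volume_pi_pi]
    have hlen : ∀ i : Fin n, volume (Set.Ico (((z i : ℕ) : ℝ)/2^p) ((((z i : ℕ) : ℝ)+1)/2^p))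
        = ENNReal.ofReal ((1:ℝ)/2^p) := by
      intro i
      rw [Real.volume_Ico]
      congr 1
      field_simp
      ring
    simp only [hlen]
    rw [Finset.prod_const, Finset.card_univ, Fintype.card_fin,
      ← ENNReal.ofReal_pow (by positivity)]
    apply ENNReal.ofReal_le_ofReal
    calc ((1:ℝ)/2^p) ^ n ≤ ((1:ℝ)/2^p) ^ 1 := by
          apply pow_le_pow_of_le_one (by positivity) (by rw [div_le_one h2p]; exact one_le_pow₀ one_le_two) hn1
      _ = (1:ℝ)/2^p := pow_one _
      _ ≤ a := hp
  have hcelldisj : ∀ z z', z ≠ z' → cell z ∩ cell z' = ∅ := by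
    intro z z' hne
    rw [Set.eq_empty_iff_forall_notMem]
    rintro x ⟨hx, hx'⟩
    obtain ⟨i, hi⟩ := Function.ne_iff.mp hne
    rcases hi.lt_or_gt with hlt | hlt
    · have h1 : ((z i : ℕ) : ℝ) + 1 ≤ ((z' i : ℕ) : ℝ) := by
        have : (z i : ℕ) + 1 ≤ (z' i : ℕ) := hlt
        exact_mod_cast this
      have := (hx i).2
      have := (hx' i).1
      have hdiv : (((z i : ℕ) : ℝ)+1)/2^p ≤ ((z' i : ℕ) : ℝ)/2^p :=
        div_le_div_of_nonneg_right h1 h2p.le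
      linarith
    · have h1 : ((z' i : ℕ) : ℝ) + 1 ≤ ((z i : ℕ) : ℝ) := by
        have : (z' i : ℕ) + 1 ≤ (z i : ℕ) := hlt
        exact_mod_cast this
      have := (hx' i).2
      have := (hx i).1
      have hdiv : (((z' i : ℕ) : ℝ)+1)/2^p ≤ ((z i : ℕ) : ℝ)/2^p :=
        div_le_div_of_nonneg_right h1 h2p.le
      linarith
  have hcover : s ⊆ ⋃ z, cell z := by
    intro x hx
    have hxG := hsub hx
    have hz : ∀ i : Fin n, ⌊x i * 2^p⌋₊ < 2^p := by
      intro i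
      rw [Nat.floor_lt (by nlinarith [(hxG i).1])]
      push_cast
      nlinarith [(hxG i).2]
    refine Set.mem_iUnion.mpr ⟨fun i => ⟨⌊x i * 2^p⌋₊, hz i⟩, fun i => ⟨?_, ?_⟩⟩
    · rw [div_le_iff₀ h2p]
      exact Nat.floor_le (by nlinarith [(hxG i).1])
    · rw [lt_div_iff₀ h2p]
      exact Nat.lt_floor_add_one _
  have hpart : ∑ z : Fin n → Fin (2^p), volume (s ∩ cell z) = volume s := by
    have hd : Pairwise (Function.onFun Disjoint fun z => s ∩ cell z) := by
      intro z z' hne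
      exact Set.disjoint_of_subset Set.inter_subset_right Set.inter_subset_right
        (Set.disjoint_iff_inter_eq_empty.mpr (hcelldisj z z' hne))
    have hm := measure_iUnion (μ := volume) hd (fun z => hs.inter (hcellmeas z))
    rw [tsum_fintype] at hm
    rw [← hm, ← Set.inter_iUnion, Set.inter_eq_self_of_subset_left hcover]
  set T : Finset (Fin n → Fin (2^p)) :=
    Finset.univ.filter (fun z => volume (s ∩ cell z) ≠ 0) with hTdef
  have hTsum : ∑ z ∈ T, volume (s ∩ cell z) = volume s := by
    rw [hTdef, Finset.sum_filter_of_ne (fun z _ hz => hz), hpart]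
  set e2 := T.equivFin with he2
  refine ⟨T.card, fun i => s ∩ cell (e2.symm i : _), ?_, ?_, ?_⟩
  · intro i
    have hmem : volume (s ∩ cell (e2.symm i : _)) ≠ 0 :=
      (Finset.mem_filter.mp (e2.symm i).2).2
    exact ⟨hs.inter (hcellmeas _), Set.inter_subset_left, hmem,
      le_trans (measure_mono Set.inter_subset_right) (hcellvol _)⟩
  · intro i j hij
    have hne : ((e2.symm i : _) : Fin n → Fin (2^p)) ≠ (e2.symm j : _) := by
      intro h
      exact hij (e2.symm.injective (Subtype.ext h))
    rw [Set.eq_empty_iff_forall_notMem]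
    rintro x ⟨hxi, hxj⟩
    have := hcelldisj _ _ hne
    rw [Set.eq_empty_iff_forall_notMem] at this
    exact this x ⟨hxi.2, hxj.2⟩
  · calc ∑ i : Fin T.card, volume (s ∩ cell (e2.symm i : _))
        = ∑ z : T, volume (s ∩ cell z) := Equiv.sum_comp e2.symm (fun z : T => volume (s ∩ cell z))
      _ = ∑ z ∈ T, volume (s ∩ cell z) := Finset.sum_coe_sort T (fun z => volume (s ∩ cell z))
      _ = volume s := hTsum

theorem stmt4 {n : ℕ} (hn : 2 ≤ n)
    (Φ : ℝ → ℝ) (hΦmono : MonotoneOn Φ (Set.Ioi 0)) (hΦpos : ∀ t : ℝ, 0 < t → 0 < Φ t)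
    (f : EucSp n → ℝ) (hf : MemL f) (k : ℕ) (hk : 1 ≤ k)
    (hnot : ∫⁻ x in {x | f x ≠ 0}, ENNReal.ofReal (Φ (|f x| / k)) = ⊤)
    (α : ℝ → ℝ) (hα : ∀ t : ℝ, 1 < t → 0 < α t) :
    ∃ (m : ℕ) (A : Fin m → Set (EucSp n)) (h : Fin m → ℝ),
      (∀ j, MeasurableSet (A j) ∧ A j ⊆ Gcube n) ∧
      (∀ i j, i ≠ j → A i ∩ A j = ∅) ∧
      (∀ j, (k : ℝ) < h j) ∧ (∀ j, ∀ x ∈ A j, h j ≤ |f x|) ∧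
      (∀ j, 0 < volume (A j) ∧ volume (A j) ≤ ENNReal.ofReal (α (h j / k))) ∧
      (k : ℝ) < ∑ j, Φ (h j / k) * (volume (A j)).toReal := by
  classical
  have hfP : Integrable f ∧ {x | f x ≠ 0} ⊆ Gcube n := hf
  obtain ⟨hfi, hfG⟩ := hfP
  have hk0 : (0:ℝ) < k := by exact_mod_cast hk
  have hn1 : 1 ≤ n := le_trans (by norm_num) hn
  have hmeasf := hfi.aemeasurable
  set g := hmeasf.mk f with hgdef
  have hg : Measurable g := hmeasf.measurable_mk
  have hfg : f =ᵐ[volume] g := hmeasf.ae_eq_mk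
  set F : EucSp n → ℝ := fun x => |g x| / k with hFdef
  have hFmeas : Measurable F := hg.abs.div_const _
  set N := toMeasurable volume {x | f x ≠ g x} with hNdef
  have hNmeas : MeasurableSet N := measurableSet_toMeasurable _ _
  have hN0 : volume N = 0 := by
    rw [hNdef, measure_toMeasurable]
    exact ae_iff.mp hfg
  have hfgN : ∀ x, x ∉ N → f x = g x := fun x hx => by
    by_contra hne; exact hx (subset_toMeasurable _ _ hne)
  have hsupp : volume {x | g x ≠ 0} < ⊤ := by
    have hsub2 : {x | g x ≠ 0} ⊆ Gcube n ∪ N := by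
      intro x hx
      by_cases hxN : x ∈ N
      · exact Or.inr hxN
      · left; apply hfG; simp only [Set.mem_setOf_eq]; rw [hfgN x hxN]; exact hx
    calc volume {x | g x ≠ 0} ≤ volume (Gcube n ∪ N) := measure_mono hsub2
      _ ≤ volume (Gcube n) + volume N := measure_union_le _ _
      _ < ⊤ := by rw [hN0, add_zero]; exact gcube_volume_lt_top
  have hgne : MeasurableSet {x | g x ≠ 0} := (hg (measurableSet_singleton 0)).compl
  have hnotg : ∫⁻ x in {x | g x ≠ 0}, ENNReal.ofReal (Φ (F x)) = ⊤ := by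
    have hres : volume.restrict {x | f x ≠ 0} = volume.restrict {x | g x ≠ 0} := by
      apply Measure.restrict_congr_set
      filter_upwards [hfg] with x hx
      show (f x ≠ 0) = (g x ≠ 0)
      rw [hx]
    have hcong : ∫⁻ x in {x | g x ≠ 0}, ENNReal.ofReal (Φ (|f x| / k))
        = ∫⁻ x in {x | g x ≠ 0}, ENNReal.ofReal (Φ (F x)) := by
      apply lintegral_congr_ae
      filter_upwards [ae_restrict_of_ae hfg] with x hx
      rw [hFdef]; simp only; rw [hx]
    rw [← hcong, ← hres]; exact hnot
  set G' := {x | g x ≠ 0} ∩ {x | 2 < F x} with hG'def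
  have hG'meas : MeasurableSet G' := hgne.inter (hFmeas measurableSet_Ioi)
  have hG'fin : volume G' < ⊤ := (measure_mono Set.inter_subset_left).trans_lt hsupp
  have hIG' : ∫⁻ x in G', ENNReal.ofReal (Φ (F x)) = ⊤ := by
    set Bset := {x | g x ≠ 0} ∩ {x | F x ≤ 2} with hBdef
    have hBmeas : MeasurableSet Bset := hgne.inter (hFmeas measurableSet_Iic)
    have hBdisj : Disjoint Bset G' := by
      rw [Set.disjoint_left]; rintro x ⟨_, hx2⟩ hx'
      have hx2' : 2 < F x := hx'.2
      have hx2'' : F x ≤ 2 := hx2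
      linarith
    have hunion : {x | g x ≠ 0} = Bset ∪ G' := by
      ext x; constructor
      · intro hx
        rcases le_or_gt (F x) 2 with h | h
        · exact Or.inl ⟨hx, h⟩
        · exact Or.inr ⟨hx, h⟩
      · rintro (hx | hx) <;> exact hx.1
    have hBfin : ∫⁻ x in Bset, ENNReal.ofReal (Φ (F x)) ≠ ⊤ := by
      have hb : ∫⁻ x in Bset, ENNReal.ofReal (Φ (F x)) ≤ ENNReal.ofReal (Φ 2) * volume Bset := by
        rw [← setLIntegral_const]
        apply setLIntegral_mono' hBmeas
        intro x hx
        apply ENNReal.ofReal_le_ofReal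
        have hFpos : 0 < F x := div_pos (abs_pos.mpr hx.1) hk0
        exact hΦmono hFpos (by norm_num : (2:ℝ) ∈ Set.Ioi 0) hx.2
      refine ne_top_of_le_ne_top ?_ hb
      exact ENNReal.mul_ne_top ENNReal.ofReal_ne_top
        ((measure_mono Set.inter_subset_left).trans_lt hsupp).ne
    have hx := hnotg
    rw [hunion, lintegral_union hG'meas hBdisj] at hx
    by_contra hne
    exact (ENNReal.add_ne_top.mpr ⟨hBfin, hne⟩) hx
  set U : ℝ → Set ℝ := fun c => {t : ℝ | 0 < t ∧ c < Φ t} with hUdef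
  have hUmeas : ∀ c, MeasurableSet (U c) := by
    intro c
    apply upperSet_measurableSet
    intro s t hs hst
    have h0t : (0:ℝ) < t := lt_of_lt_of_le hs.1 hst
    exact ⟨h0t, lt_of_lt_of_le hs.2 (hΦmono hs.1 h0t hst)⟩
  set S : ℤ → Set (EucSp n) :=
    fun q => (G' ∩ F ⁻¹' (U ((2:ℝ)^q))) \ F ⁻¹' (U ((2:ℝ)^(q+1))) with hSdef
  have hSmeas : ∀ q, MeasurableSet (S q) :=
    fun q => (hG'meas.inter (hFmeas (hUmeas _))).diff (hFmeas (hUmeas _))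
  have hSsub : ∀ q, S q ⊆ G' := fun q x hx => hx.1.1
  have hSmem : ∀ q x, x ∈ S q ↔ (x ∈ G' ∧ (2:ℝ)^q < Φ (F x) ∧ Φ (F x) ≤ (2:ℝ)^(q+1)) := by
    intro q x
    constructor
    · rintro ⟨⟨hxG', hxU⟩, hxN⟩
      have hxU' : 0 < F x ∧ (2:ℝ)^q < Φ (F x) := hxU
      refine ⟨hxG', hxU'.2, ?_⟩
      by_contra hgt
      push_neg at hgt
      exact hxN ⟨hxU'.1, hgt⟩
    · rintro ⟨hxG', h1, h2⟩
      have hF2 : 2 < F x := hxG'.2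
      refine ⟨⟨hxG', ⟨by linarith, h1⟩⟩, ?_⟩
      intro hc
      have hc2 : (2:ℝ)^(q+1) < Φ (F x) := hc.2
      linarith
  have hScover : G' = ⋃ q : ℤ, S q := by
    apply subset_antisymm
    · intro x hx
      have hF2 : 2 < F x := hx.2
      have hΦF : 0 < Φ (F x) := hΦpos _ (by linarith)
      obtain ⟨q, hq⟩ := exists_mem_Ioc_zpow hΦF one_lt_two
      exact Set.mem_iUnion.mpr ⟨q, (hSmem q x).mpr ⟨hx, hq.1, hq.2⟩⟩
    · exact Set.iUnion_subset hSsub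
  have hSdisj : Pairwise (Function.onFun Disjoint S) := by
    intro q q' hne
    rw [Function.onFun, Set.disjoint_left]
    intro x hx hx'
    obtain ⟨-, h1, h2⟩ := (hSmem q x).mp hx
    obtain ⟨-, h1', h2'⟩ := (hSmem q' x).mp hx'
    rcases hne.lt_or_gt with hlt | hlt
    · have : (2:ℝ)^(q+1) ≤ (2:ℝ)^q' := zpow_le_zpow_right₀ one_le_two (by omega)
      linarith
    · have : (2:ℝ)^(q'+1) ≤ (2:ℝ)^q := zpow_le_zpow_right₀ one_le_two (by omega)
      linarith
  have htsum : ∑' q : ℤ, ∫⁻ x in S q, ENNReal.ofReal (Φ (F x)) = ⊤ := by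
    rw [← lintegral_iUnion hSmeas hSdisj, ← hScover]
    exact hIG'
  obtain ⟨Q, hQ⟩ : ∃ Q : Finset ℤ,
      ENNReal.ofReal (8*k) < ∑ q ∈ Q, ∫⁻ x in S q, ENNReal.ofReal (Φ (F x)) := by
    have h8 : ENNReal.ofReal (8*k) <
        ⨆ Q : Finset ℤ, ∑ q ∈ Q, ∫⁻ x in S q, ENNReal.ofReal (Φ (F x)) := by
      rw [← ENNReal.tsum_eq_iSup_sum, htsum]
      exact ENNReal.ofReal_lt_top
    exact lt_iSup_iff.mp h8
  set Q' : Finset ℤ := Q.filter (fun q => volume (S q) ≠ 0) with hQ'def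
  have hQ'sum : ENNReal.ofReal (8*k) < ∑ q ∈ Q', ∫⁻ x in S q, ENNReal.ofReal (Φ (F x)) := by
    have heq : ∑ q ∈ Q', ∫⁻ x in S q, ENNReal.ofReal (Φ (F x))
        = ∑ q ∈ Q, ∫⁻ x in S q, ENNReal.ofReal (Φ (F x)) := by
      rw [hQ'def]
      apply Finset.sum_filter_of_ne
      intro q hq hne h0
      apply hne
      rw [Measure.restrict_eq_zero.mpr h0, lintegral_zero_measure]
    rw [heq]
    exact hQ
  have hSfin : ∀ q : ℤ, volume (S q) ≠ ⊤ :=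
    fun q => ((measure_mono (hSsub q)).trans_lt hG'fin).ne
  have hcoreall : ∀ q ∈ Q', ∃ (h : ℝ) (S' : Set (EucSp n)), MeasurableSet S' ∧ S' ⊆ S q ∧
      2 < h ∧ (∀ x ∈ S', h ≤ F x) ∧ (2:ℝ)^q < Φ h ∧ volume S' ≠ 0 ∧
      volume (S q) ≤ 4 * volume S' := by
    intro q hq
    have hq0 : volume (S q) ≠ 0 := (Finset.mem_filter.mp hq).2
    exact core_select volume Φ hΦmono hFmeas ((2:ℝ)^q) (hSmeas q) hq0 (hSfin q)
      (fun x hx => ⟨((hSmem q x).mp hx).1.2, ((hSmem q x).mp hx).2.1⟩)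
  choose! hh SS hSSmeas hSSsub hhgt2 hhleF hΦhh hSS0 hSSbig using hcoreall
  have hSNsub : ∀ q ∈ Q', SS q \ N ⊆ Gcube n := by
    intro q hq x hx
    have hxS : x ∈ S q := hSSsub q hq hx.1
    have hxG' : x ∈ G' := hSsub q hxS
    have hgx : g x ≠ 0 := hxG'.1
    apply hfG
    show f x ≠ 0
    rw [hfgN x hx.2]
    exact hgx
  have hSSfin : ∀ q ∈ Q', volume (SS q) ≠ ⊤ := fun q hq =>
    ((measure_mono (hSSsub q hq)).trans_lt (lt_top_iff_ne_top.mpr (hSfin q))).ne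
  have hsubdivall : ∀ q ∈ Q', ∃ (m : ℕ) (B : Fin m → Set (EucSp n)),
      (∀ i, MeasurableSet (B i) ∧ B i ⊆ SS q \ N ∧ volume (B i) ≠ 0 ∧
        volume (B i) ≤ ENNReal.ofReal (α (hh q))) ∧
      (∀ i j, i ≠ j → B i ∩ B j = ∅) ∧ ∑ i, volume (B i) = volume (SS q \ N) := by
    intro q hq
    exact subdiv hn1 ((hSSmeas q hq).diff hNmeas) (hSNsub q hq) (α (hh q))
      (hα _ (by linarith [hhgt2 q hq]))
  choose! mm BB hBBprop hBBdisj hBBsum using hsubdivall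
  set ι := Σ q : {q : ℤ // q ∈ Q'}, Fin (mm ↑q) with hιdef
  set e : Fin (Fintype.card ι) ≃ ι := (Fintype.equivFin ι).symm with hedef
  refine ⟨Fintype.card ι, fun j => BB ↑(e j).1 (e j).2, fun j => (k:ℝ) * hh ↑(e j).1,
    ?_, ?_, ?_, ?_, ?_, ?_⟩
  · intro j
    have hq := (e j).1.2
    have hB := hBBprop ↑(e j).1 hq (e j).2
    exact ⟨hB.1, hB.2.1.trans (hSNsub _ hq)⟩
  · have key : ∀ x y : ι, x ≠ y → BB ↑x.1 x.2 ∩ BB ↑y.1 y.2 = ∅ := by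
      rintro ⟨⟨q1, hq1⟩, b1⟩ ⟨⟨q2, hq2⟩, b2⟩ hxy
      by_cases hqq : q1 = q2
      · subst hqq
        have hbb : b1 ≠ b2 := by
          intro hb; subst hb; exact hxy rfl
        exact hBBdisj q1 hq1 b1 b2 hbb
      · rw [Set.eq_empty_iff_forall_notMem]
        rintro x ⟨hx1, hx2⟩
        have hxs1 : x ∈ S q1 := hSSsub q1 hq1 ((hBBprop q1 hq1 b1).2.1 hx1).1
        have hxs2 : x ∈ S q2 := hSSsub q2 hq2 ((hBBprop q2 hq2 b2).2.1 hx2).1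
        exact Set.disjoint_left.mp (hSdisj hqq) hxs1 hxs2
    intro i j hij
    exact key _ _ (fun hEq => hij (e.injective hEq))
  · intro j
    have h2 := hhgt2 ↑(e j).1 (e j).1.2
    show (k:ℝ) < k * hh ↑(e j).1
    nlinarith [hk0]
  · intro j x hx
    have hq := (e j).1.2
    have hxSN : x ∈ SS ↑(e j).1 \ N := (hBBprop ↑(e j).1 hq (e j).2).2.1 hx
    have hFle : hh ↑(e j).1 ≤ F x := hhleF ↑(e j).1 hq x hxSN.1
    have hmul : (k:ℝ) * hh ↑(e j).1 ≤ |g x| := by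
      have : hh ↑(e j).1 ≤ |g x| / k := hFle
      rw [le_div_iff₀ hk0] at this
      linarith
    rw [hfgN x hxSN.2]
    exact hmul
  · intro j
    have hq := (e j).1.2
    have hB := hBBprop ↑(e j).1 hq (e j).2
    refine ⟨pos_iff_ne_zero.mpr hB.2.2.1, ?_⟩
    rw [mul_div_cancel_left₀ _ hk0.ne']
    exact hB.2.2.2
  · -- the key quantitative estimate
    have hvSS : ∀ q ∈ Q', volume (SS q \ N) = volume (SS q) := fun q hq =>
      measure_diff_null hN0
    have hterm : ∀ q ∈ Q', ∫⁻ x in S q, ENNReal.ofReal (Φ (F x))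
        ≤ ENNReal.ofReal (8 * Φ (hh q) * (volume (SS q)).toReal) := by
      intro q hq
      have h1 : ∫⁻ x in S q, ENNReal.ofReal (Φ (F x))
          ≤ ENNReal.ofReal ((2:ℝ)^(q+1)) * volume (S q) := by
        rw [← setLIntegral_const]
        apply setLIntegral_mono' (hSmeas q)
        intro x hx
        exact ENNReal.ofReal_le_ofReal ((hSmem q x).mp hx).2.2
      have h3 : ENNReal.ofReal ((2:ℝ)^(q+1)) * volume (S q)
          ≤ ENNReal.ofReal ((2:ℝ)^(q+1)) * (4 * volume (SS q)) :=
        mul_le_mul_right (hSSbig q hq) _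
      have h4 : ENNReal.ofReal ((2:ℝ)^(q+1)) * (4 * volume (SS q))
          = ENNReal.ofReal (4 * (2:ℝ)^(q+1) * (volume (SS q)).toReal) := by
        rw [ENNReal.ofReal_mul (by positivity : (0:ℝ) ≤ 4 * 2^(q+1)),
          ENNReal.ofReal_mul (by norm_num : (0:ℝ) ≤ 4),
          ENNReal.ofReal_toReal (hSSfin q hq),
          show ENNReal.ofReal (4:ℝ) = (4:ℝ≥0∞) by simp]
        ring
      have h5 : 4 * (2:ℝ)^(q+1) * (volume (SS q)).toReal
          ≤ 8 * Φ (hh q) * (volume (SS q)).toReal := by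
        have hz : (2:ℝ)^(q+1) = 2^q * 2 := zpow_add_one₀ two_ne_zero q
        have hzq := hΦhh q hq
        have hv : 0 ≤ (volume (SS q)).toReal := ENNReal.toReal_nonneg
        nlinarith
      calc ∫⁻ x in S q, ENNReal.ofReal (Φ (F x))
          ≤ ENNReal.ofReal ((2:ℝ)^(q+1)) * volume (S q) := h1
        _ ≤ ENNReal.ofReal ((2:ℝ)^(q+1)) * (4 * volume (SS q)) := h3
        _ = ENNReal.ofReal (4 * (2:ℝ)^(q+1) * (volume (SS q)).toReal) := h4
        _ ≤ ENNReal.ofReal (8 * Φ (hh q) * (volume (SS q)).toReal) :=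
            ENNReal.ofReal_le_ofReal h5
    have hnonneg : ∀ q ∈ Q', 0 ≤ 8 * Φ (hh q) * (volume (SS q)).toReal := by
      intro q hq
      have h2q : (0:ℝ) < 2^q := zpow_pos (by norm_num) q
      have := hΦhh q hq
      have hv : 0 ≤ (volume (SS q)).toReal := ENNReal.toReal_nonneg
      nlinarith
    have hkey : (8:ℝ) * k < ∑ q ∈ Q', 8 * Φ (hh q) * (volume (SS q)).toReal := by
      have hsumle := Finset.sum_le_sum hterm
      have hofsum : ∑ q ∈ Q', ENNReal.ofReal (8 * Φ (hh q) * (volume (SS q)).toReal)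
          = ENNReal.ofReal (∑ q ∈ Q', 8 * Φ (hh q) * (volume (SS q)).toReal) :=
        (ENNReal.ofReal_sum_of_nonneg hnonneg).symm
      have hlt := lt_of_lt_of_le hQ'sum (hsumle.trans_eq hofsum)
      exact (ENNReal.ofReal_lt_ofReal_iff_of_nonneg (by positivity)).mp hlt
    have hfinal : (k:ℝ) < ∑ q ∈ Q', Φ (hh q) * (volume (SS q)).toReal := by
      have h8 : ∑ q ∈ Q', 8 * Φ (hh q) * (volume (SS q)).toReal
          = 8 * ∑ q ∈ Q', Φ (hh q) * (volume (SS q)).toReal := by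
        rw [Finset.mul_sum]
        exact Finset.sum_congr rfl fun q _ => by ring
      rw [h8] at hkey
      linarith
    have hsum_eq : ∑ j, Φ (((k:ℝ) * hh ↑(e j).1)/k) * (volume (BB ↑(e j).1 (e j).2)).toReal
        = ∑ q ∈ Q', Φ (hh q) * (volume (SS q)).toReal := by
      have hstep1 : ∀ j, Φ (((k:ℝ) * hh ↑(e j).1)/k) * (volume (BB ↑(e j).1 (e j).2)).toReal
          = (fun x : ι => Φ (hh ↑x.1) * (volume (BB ↑x.1 x.2)).toReal) (e j) := by
        intro j
        simp only
        rw [mul_div_cancel_left₀ _ hk0.ne']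
      rw [Finset.sum_congr rfl (fun j _ => hstep1 j),
        Equiv.sum_comp e (fun x : ι => Φ (hh ↑x.1) * (volume (BB ↑x.1 x.2)).toReal)]
      rw [← Finset.univ_sigma_univ, Finset.sum_sigma]
      have hinner : ∀ q : {q : ℤ // q ∈ Q'}, ∑ b : Fin (mm ↑q),
          Φ (hh ↑q) * (volume (BB ↑q b)).toReal = Φ (hh ↑q) * (volume (SS ↑q)).toReal := by
        intro q
        rw [← Finset.mul_sum]
        congr 1
        have hfin : ∀ b : Fin (mm ↑q), b ∈ (Finset.univ : Finset (Fin (mm ↑q))) →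
            volume (BB ↑q b) ≠ ⊤ := fun b _ =>
          (lt_of_le_of_lt (hBBprop ↑q q.2 b).2.2.2 ENNReal.ofReal_lt_top).ne
        rw [← ENNReal.toReal_sum hfin, hBBsum ↑q q.2, hvSS ↑q q.2]
      rw [Finset.sum_congr rfl (fun q _ => hinner q)]
      exact Finset.sum_coe_sort Q' (fun q => Φ (hh q) * (volume (SS q)).toReal)
    rw [hsum_eq]
    exact hfinal


end
end

section
/- Let n ≥ 2, let Φ : (0,∞) → (0,∞) be an increasing function, let f ∈ L(𝔾ⁿ) be such that f/h ∉ Φ(L)(𝔾ⁿ) for every h ≥ 1, and let α : (1,∞) → (0,∞). Then there exist a sequence of measurable sets (A_k) and sequences of positive numbers (h_k) and (q_k) such that: (1) A_k ∩ A_m = ∅ for k ≠ m; (2) q_k < h_k ≤ |f(x)| for every k and every x ∈ A_k; (3) q_k → ∞; (4) 0 < |A_k| ≤ α(h_k/q_k) for every k; (5) Σ_{k=1}^∞ Φ(h_k/q_k)·|A_k| = ∞. -/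
open MeasureTheory Set Filter Topology Metric ENNReal

noncomputable section

section AuxSTMT5

open Bornology

lemma stmt5_cell_volume (n K : ℕ) (c : Fin n → Fin K) :
    volume {x : EucSp n | ∀ i, (c i : ℝ)/K ≤ x i ∧ x i < ((c i : ℝ)+1)/K}
      = (ENNReal.ofReal (1/K))^n := by
  have : {x : EucSp n | ∀ i, (c i : ℝ)/K ≤ x i ∧ x i < ((c i : ℝ)+1)/K}
      = (MeasurableEquiv.toLp 2 (Fin n → ℝ)).symm ⁻¹'
        (univ.pi fun i => Ico ((c i : ℝ)/K) (((c i : ℝ)+1)/K)) := by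
    ext x; simp [MeasurableEquiv.toLp, Set.mem_pi, Set.mem_Ico]; rfl
  rw [this, MeasurePreserving.measure_preimage
      (EuclideanSpace.volume_preserving_symm_measurableEquiv_toLp (Fin n))
      ((MeasurableSet.univ_pi fun i => measurableSet_Ico).nullMeasurableSet), volume_pi_pi]
  have : ∀ i : Fin n, volume (Ico ((c i : ℝ)/K) (((c i : ℝ)+1)/K)) = ENNReal.ofReal (1/K) := by
    intro i; rw [Real.volume_Ico, div_sub_div_same, add_sub_cancel_left]
  rw [Finset.prod_congr rfl (fun i _ => this i), Finset.prod_const, Finset.card_univ,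
    Fintype.card_fin]

lemma stmt5_cell_measurable (n K : ℕ) (c : Fin n → Fin K) :
    MeasurableSet {x : EucSp n | ∀ i, (c i : ℝ)/K ≤ x i ∧ x i < ((c i : ℝ)+1)/K} := by
  have : {x : EucSp n | ∀ i, (c i : ℝ)/K ≤ x i ∧ x i < ((c i : ℝ)+1)/K}
      = ⋂ i, {x : EucSp n | (c i : ℝ)/K ≤ x i ∧ x i < ((c i : ℝ)+1)/K} := by
    ext x; simp only [Set.mem_iInter, Set.mem_setOf_eq]
  rw [this]
  refine MeasurableSet.iInter fun i => ?_
  have hm : Measurable fun x : EucSp n => x i :=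
    (continuous_apply i).measurable.comp (MeasurableEquiv.toLp 2 (Fin n → ℝ)).symm.measurable
  exact (measurableSet_le measurable_const hm).inter (measurableSet_lt hm measurable_const)

lemma stmt5_partition_small {n : ℕ} (hn : 0 < n) (s : Set (EucSp n)) (hs : MeasurableSet s)
    (hsub : s ⊆ Gcube n) (ε : ℝ≥0∞) (hε : 0 < ε) :
    ∃ (p : ℕ) (P : Fin p → Set (EucSp n)), (∀ i, MeasurableSet (P i)) ∧ (∀ i, P i ⊆ s) ∧
      (∀ i j, i ≠ j → Disjoint (P i) (P j)) ∧ (∀ i, 0 < volume (P i) ∧ volume (P i) ≤ ε) ∧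
      ∑ i, volume (P i) = volume s := by
  classical
  obtain ⟨K, hK⟩ := ENNReal.exists_inv_nat_lt hε.ne'
  have hK0 : 0 < K := by
    rcases Nat.eq_zero_or_pos K with h | h
    · exfalso; rw [h] at hK; simp at hK
    · exact h
  have hK0' : (0:ℝ) < K := by exact_mod_cast hK0
  set cell : (Fin n → Fin K) → Set (EucSp n) :=
    fun c => {x : EucSp n | ∀ i, (c i : ℝ)/K ≤ x i ∧ x i < ((c i : ℝ)+1)/K} with hcell
  have hcover : ∀ x ∈ Gcube n, ∃ c, x ∈ cell c := by
    intro x hx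
    have hxi : ∀ i, ⌊x i * K⌋₊ < K := by
      intro i
      have h1 : x i * K < K := by
        have := (hx i).2
        nlinarith [hx i, hK0']
      exact Nat.floor_lt (by nlinarith [(hx i).1]) |>.mpr (by exact_mod_cast h1)
    refine ⟨fun i => ⟨⌊x i * K⌋₊, hxi i⟩, fun i => ?_⟩
    have hx0 : 0 ≤ x i * K := by nlinarith [(hx i).1]
    constructor
    · rw [div_le_iff₀ hK0']; exact Nat.floor_le hx0
    · rw [lt_div_iff₀ hK0']; exact Nat.lt_floor_add_one (x i * K)
  have key : ∀ (a : Fin K) (y : ℝ), (a:ℝ)/K ≤ y → y < ((a:ℝ)+1)/K → (a:ℕ) = ⌊y * K⌋₊ := by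
    intro a y hy1 hy2
    have h1 : ((a:ℕ):ℝ) ≤ y * K := by
      rw [← div_le_iff₀ hK0']; exact_mod_cast hy1
    have h2 : y * K < ((a:ℕ):ℝ) + 1 := by
      rw [lt_div_iff₀ hK0'] at hy2; exact_mod_cast hy2
    symm
    rw [Nat.floor_eq_iff (le_trans (Nat.cast_nonneg _) h1)]
    exact ⟨h1, by exact_mod_cast h2⟩
  have huniq : ∀ x c c', x ∈ cell c → x ∈ cell c' → c = c' := by
    intro x c c' hc hc'
    funext i
    exact Fin.ext ((key _ _ (hc i).1 (hc i).2).trans (key _ _ (hc' i).1 (hc' i).2).symm)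
  have hcellm : ∀ c, MeasurableSet (cell c) := fun c => stmt5_cell_measurable n K c
  have hcellvol : ∀ c, volume (cell c) ≤ ε := by
    intro c
    rw [hcell]
    rw [stmt5_cell_volume n K c]
    calc (ENNReal.ofReal (1/K))^n ≤ (ENNReal.ofReal (1/K))^1 := by
          apply pow_le_pow_of_le_one zero_le _ hn
          rw [ENNReal.ofReal_le_one]
          rw [div_le_one hK0']; exact_mod_cast hK0
      _ = ENNReal.ofReal (1/K) := pow_one _
      _ ≤ (K:ℝ≥0∞)⁻¹ := by
          rw [one_div, ENNReal.ofReal_inv_of_pos hK0']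
          simp
      _ ≤ ε := hK.le
  set pc : (Fin n → Fin K) → Set (EucSp n) := fun c => s ∩ cell c with hpc
  have hdecomp : s = ⋃ c, pc c := by
    ext x; constructor
    · intro hx
      obtain ⟨c, hc⟩ := hcover x (hsub hx)
      exact Set.mem_iUnion.mpr ⟨c, hx, hc⟩
    · intro hx; obtain ⟨c, hc⟩ := Set.mem_iUnion.mp hx; exact hc.1
  have hpcdisj : Pairwise (Function.onFun Disjoint pc) := by
    intro c c' hcc
    rw [Function.onFun, Set.disjoint_left]
    rintro x ⟨-, hc⟩ ⟨-, hc'⟩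
    exact hcc (huniq x c c' hc hc')
  have hsum : ∑ c, volume (pc c) = volume s := by
    rw [hdecomp, measure_iUnion hpcdisj fun c => hs.inter (hcellm c), tsum_fintype]
  set F : Finset (Fin n → Fin K) := Finset.univ.filter (fun c => volume (pc c) ≠ 0) with hF
  refine ⟨F.card, fun i => pc (F.equivFin.symm i), ?_, ?_, ?_, ?_, ?_⟩
  · intro i; exact hs.inter (hcellm _)
  · intro i; exact Set.inter_subset_left
  · intro i j hij
    apply hpcdisj
    intro h
    exact hij (F.equivFin.symm.injective (Subtype.ext h))
  · intro i
    have hi := (F.equivFin.symm i).2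
    have hi' := Finset.mem_filter.mp hi
    exact ⟨pos_iff_ne_zero.mpr hi'.2, le_trans (measure_mono Set.inter_subset_right) (hcellvol _)⟩
  · rw [← hsum]
    rw [← Finset.sum_filter_ne_zero Finset.univ (f := fun c => volume (pc c))]
    rw [← hF]
    rw [← Finset.sum_attach F (fun c => volume (pc c))]
    exact Fintype.sum_equiv F.equivFin.symm _ _ (fun i => rfl)

end AuxSTMT5

theorem stmt5 {n : ℕ} (hn : 2 ≤ n)
    (Φ : ℝ → ℝ) (hΦmono : MonotoneOn Φ (Set.Ioi 0)) (hΦpos : ∀ t : ℝ, 0 < t → 0 < Φ t)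
    (f : EucSp n → ℝ) (hf : MemL f)
    (hnot : ∀ h : ℝ, 1 ≤ h → ∫⁻ x in {x | f x ≠ 0}, ENNReal.ofReal (Φ (|f x| / h)) = ⊤)
    (α : ℝ → ℝ) (hα : ∀ t : ℝ, 1 < t → 0 < α t) :
    ∃ (A : ℕ → Set (EucSp n)) (h q : ℕ → ℝ),
      (∀ k, MeasurableSet (A k)) ∧
      (∀ k m, k ≠ m → A k ∩ A m = ∅) ∧
      (∀ k, 0 < q k) ∧ (∀ k, q k < h k) ∧ (∀ k, ∀ x ∈ A k, h k ≤ |f x|) ∧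
      Filter.Tendsto q Filter.atTop Filter.atTop ∧
      (∀ k, 0 < volume (A k) ∧ volume (A k) ≤ ENNReal.ofReal (α (h k / q k))) ∧
      (∑' k, ENNReal.ofReal (Φ (h k / q k)) * volume (A k)) = ⊤ := by
  classical
  obtain ⟨hint, hsupp⟩ := hf
  have hn1 : 0 < n := by omega
  -- measurable representative
  obtain ⟨g, hgm, hfg⟩ : ∃ g : EucSp n → ℝ, Measurable g ∧ f =ᵐ[volume] g :=
    ⟨hint.aestronglyMeasurable.mk f,
      hint.aestronglyMeasurable.stronglyMeasurable_mk.measurable,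
      hint.aestronglyMeasurable.ae_eq_mk⟩
  set N : Set (EucSp n) := toMeasurable volume {x | f x ≠ g x} with hNdef
  have hNm : MeasurableSet N := measurableSet_toMeasurable _ _
  have hN0 : volume N = 0 := by
    rw [hNdef, measure_toMeasurable]
    exact hfg
  have hfgN : ∀ x, x ∉ N → f x = g x := by
    intro x hx
    by_contra h
    exact hx (subset_toMeasurable _ _ h)
  -- bounded cube
  have hGb : Bornology.IsBounded (Gcube n) := by
    apply (Metric.isBounded_closedBall (x := (0 : EucSp n)) (r := Real.sqrt n)).subset
    intro x hx
    rw [Metric.mem_closedBall, dist_zero_right]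
    rw [EuclideanSpace.norm_eq]
    apply Real.sqrt_le_sqrt
    calc ∑ i, ‖x i‖^2 ≤ ∑ _i : Fin n, 1 := by
          refine Finset.sum_le_sum fun i _ => ?_
          have h1 := (hx i).1; have h2 := (hx i).2
          rw [Real.norm_eq_abs, abs_of_pos h1]
          nlinarith
      _ = n := by simp
  have hGfin : volume (Gcube n) < ⊤ := hGb.measure_lt_top
  -- dyadic level sets
  set D : ℕ → Set (EucSp n) :=
    fun m => {x | (2:ℝ)^m < |g x| ∧ |g x| ≤ 2^(m+1)} \ N with hDdef
  have hDm : ∀ m, MeasurableSet (D m) := by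
    intro m
    exact (((measurableSet_lt measurable_const hgm.abs)).inter
      (measurableSet_le hgm.abs measurable_const)).diff hNm
  have hDsub : ∀ m, D m ⊆ Gcube n := by
    intro m x hx
    have hgx : g x ≠ 0 := by
      have := hx.1.1
      have h1 : (0:ℝ) < (2:ℝ)^m := by positivity
      intro h; rw [h] at this; simp at this; linarith
    have hfx : f x = g x := hfgN x hx.2
    exact hsupp (by rw [Set.mem_setOf_eq, hfx]; exact hgx)
  have hDfin : ∀ m, volume (D m) ≠ ⊤ :=
    fun m => ((measure_mono (hDsub m)).trans_lt hGfin).ne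
  have hDf : ∀ m x, x ∈ D m → (2:ℝ)^m < |f x| ∧ |f x| ≤ 2^(m+1) := by
    intro m x hx
    rw [hfgN x hx.2]
    exact hx.1
  have hDdisj : ∀ m m', m ≠ m' → Disjoint (D m) (D m') := by
    have key : ∀ m m', m < m' → Disjoint (D m) (D m') := by
      intro m m' hmm
      rw [Set.disjoint_left]
      rintro x ⟨⟨_, h2⟩, -⟩ ⟨⟨h3, _⟩, -⟩
      have : (2:ℝ)^(m+1) ≤ 2^m' := by
        apply pow_le_pow_right₀ (by norm_num)
        omega
      linarith
    intro m m' h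
    rcases Nat.lt_or_ge m m' with h1 | h1
    · exact key m m' h1
    · exact (key m' m (lt_of_le_of_ne h1 (Ne.symm h))).symm
  -- the basic quantities
  set T : ℕ → ℕ → ℝ≥0∞ :=
    fun j m => ENNReal.ofReal (Φ ((2:ℝ)^m / ((j:ℝ)+1))) * volume (D m) with hTdef
  have hTfin : ∀ j m, T j m ≠ ⊤ :=
    fun j m => ENNReal.mul_ne_top ENNReal.ofReal_ne_top (hDfin m)
  -- L1 : tail sums diverge
  have L1 : ∀ j M : ℕ, ∑' m : ℕ, T j (M + m) = ⊤ := by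
    intro j M
    have hj1 : (1:ℝ) ≤ 2*((j:ℝ)+1) := by
      have : (0:ℝ) ≤ (j:ℝ) := Nat.cast_nonneg j
      nlinarith
    have hj0 : (0:ℝ) < (j:ℝ)+1 := by positivity
    have htop := hnot (2*((j:ℝ)+1)) hj1
    set F : EucSp n → ℝ≥0∞ :=
      fun x => ENNReal.ofReal (Φ (|f x| / (2*((j:ℝ)+1)))) with hFdef
    set Elow : Set (EucSp n) := {x | g x ≠ 0 ∧ |g x| ≤ 2^M} \ N with hElowdef
    have hElowm : MeasurableSet Elow := by
      exact (((measurableSet_eq_fun hgm measurable_const).compl).inter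
        (measurableSet_le hgm.abs measurable_const)).diff hNm
    have hElowG : Elow ⊆ Gcube n := by
      intro x hx
      have hfx : f x = g x := hfgN x hx.2
      exact hsupp (by rw [Set.mem_setOf_eq, hfx]; exact hx.1.1
      )
    have hcover : {x | f x ≠ 0} ⊆ (N ∪ Elow) ∪ ⋃ m, D (M + m) := by
      intro x hx
      by_cases hxN : x ∈ N
      · exact Set.mem_union_left _ (Set.mem_union_left _ hxN)
      · have hfgx := hfgN x hxN
        have hgx : g x ≠ 0 := by rw [← hfgx]; exact hx
        by_cases hle : |g x| ≤ 2^M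
        · exact Set.mem_union_left _ (Set.mem_union_right _ ⟨⟨hgx, hle⟩, hxN⟩)
        · push_neg at hle
          have hex : ∃ k, |g x| ≤ 2^(k+1) := by
            obtain ⟨k, hk⟩ := pow_unbounded_of_one_lt (|g x|) (by norm_num : (1:ℝ) < 2)
            exact ⟨k, by calc |g x| ≤ 2^k := hk.le
                           _ ≤ 2^(k+1) := by apply pow_le_pow_right₀ <;> norm_num⟩
          set k := Nat.find hex with hkdef
          have hk2 : |g x| ≤ 2^(k+1) := Nat.find_spec hex
          have hk1 : (2:ℝ)^k < |g x| := by
            rcases Nat.eq_zero_or_pos k with hk0 | hk0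
            · rw [hk0, pow_zero]
              have : (1:ℝ) ≤ 2^M := one_le_pow₀ (by norm_num)
              linarith
            · have := Nat.find_min hex (m := k - 1) (by omega)
              push_neg at this
              have hkk : k - 1 + 1 = k := by omega
              rwa [hkk] at this
          have hkM : M ≤ k := by
            by_contra hMk
            push_neg at hMk
            have : (2:ℝ)^(k+1) ≤ 2^M := by
              apply pow_le_pow_right₀ (by norm_num); omega
            linarith
          apply Set.mem_union_right
          refine Set.mem_iUnion.mpr ⟨k - M, ?_⟩
          have hMk : M + (k - M) = k := by omega
          rw [hMk]
          exact ⟨⟨hk1, hk2⟩, hxN⟩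
    -- bound integral over Elow
    have hElowb : ∫⁻ x in Elow, F x ≤ ENNReal.ofReal (Φ ((2:ℝ)^M)) * volume Elow := by
      refine le_trans (lintegral_mono_ae ?_) (le_of_eq (setLIntegral_const _ _))
      refine (ae_restrict_mem hElowm).mono fun x hx => ?_
      have hfx : f x = g x := hfgN x hx.2
      have hfx0 : f x ≠ 0 := by rw [hfx]; exact hx.1.1
      have habs : 0 < |f x| := abs_pos.mpr hfx0
      rw [hFdef]
      apply ENNReal.ofReal_le_ofReal
      apply hΦmono
      · exact Set.mem_Ioi.mpr (by positivity)
      · exact Set.mem_Ioi.mpr (by positivity)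
      · calc |f x| / (2*((j:ℝ)+1)) ≤ |f x| / 1 := by
              apply div_le_div_of_nonneg_left habs.le _ hj1
              · norm_num
          _ = |f x| := div_one _
          _ ≤ 2^M := by rw [hfx]; exact hx.1.2
    have hDb : ∀ m, ∫⁻ x in D (M+m), F x ≤ T j (M+m) := by
      intro m
      rw [hTdef]
      refine le_trans (lintegral_mono_ae ?_) (le_of_eq (setLIntegral_const _ _))
      refine (ae_restrict_mem (hDm (M+m))).mono fun x hx => ?_
      have hx' := hDf (M+m) x hx
      have habs : (0:ℝ) < |f x| := lt_trans (by positivity) hx'.1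
      rw [hFdef]
      apply ENNReal.ofReal_le_ofReal
      apply hΦmono
      · exact Set.mem_Ioi.mpr (by positivity)
      · exact Set.mem_Ioi.mpr (by positivity)
      · have heq : (2:ℝ)^(M+m+1) / (2*((j:ℝ)+1)) = 2^(M+m) / ((j:ℝ)+1) := by
          rw [pow_succ]
          field_simp
        rw [← heq]
        apply div_le_div_of_nonneg_right hx'.2
        linarith
    have hchain : (⊤:ℝ≥0∞) ≤
        ((∫⁻ x in N, F x) + ∫⁻ x in Elow, F x) + ∑' m, ∫⁻ x in D (M+m), F x := by
      calc (⊤:ℝ≥0∞) = ∫⁻ x in {x | f x ≠ 0}, F x := htop.symm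
        _ ≤ ∫⁻ x in (N ∪ Elow) ∪ ⋃ m, D (M+m), F x := lintegral_mono_set hcover
        _ ≤ (∫⁻ x in N ∪ Elow, F x) + ∫⁻ x in ⋃ m, D (M+m), F x := lintegral_union_le _ _ _
        _ ≤ ((∫⁻ x in N, F x) + ∫⁻ x in Elow, F x) + ∑' m, ∫⁻ x in D (M+m), F x :=
            add_le_add (lintegral_union_le _ _ _) (lintegral_iUnion_le _ _)
    have hNint : ∫⁻ x in N, F x = 0 := setLIntegral_measure_zero _ _ hN0
    have hfin : ((∫⁻ x in N, F x) + ∫⁻ x in Elow, F x) ≠ ⊤ := by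
      rw [hNint, zero_add]
      refine ne_top_of_le_ne_top ?_ hElowb
      exact (ENNReal.mul_lt_top ENNReal.ofReal_lt_top
        ((measure_mono hElowG).trans_lt hGfin)).ne
    have hsum2 : (⊤:ℝ≥0∞) ≤
        ((∫⁻ x in N, F x) + ∫⁻ x in Elow, F x) + ∑' m, T j (M+m) :=
      le_trans hchain (add_le_add_right (ENNReal.tsum_le_tsum hDb) _)
    rcases ENNReal.add_eq_top.mp (top_le_iff.mp hsum2) with h | h
    · exact absurd h hfin
    · exact h
  -- L2 : extract finite blocks
  have L2 : ∀ j M : ℕ, ∃ M' L : ℕ, M ≤ M' ∧ j+1 ≤ M' ∧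
      1 ≤ ∑ m ∈ Finset.Ico M' L, T j m := by
    intro j M
    set M' := max M (j+1) with hM'
    have h := L1 j M'
    have h1 : (1:ℝ≥0∞) < ⨆ s : Finset ℕ, ∑ m ∈ s, T j (M' + m) := by
      rw [← ENNReal.tsum_eq_iSup_sum, h]; exact ENNReal.one_lt_top
    obtain ⟨s, hs⟩ := lt_iSup_iff.mp h1
    refine ⟨M', M' + (s.sup id) + 1, le_max_left _ _, le_max_right _ _, ?_⟩
    calc (1:ℝ≥0∞) ≤ ∑ m ∈ s, T j (M'+m) := hs.le
      _ = ∑ m' ∈ s.image (fun a => M' + a), T j m' := by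
          rw [Finset.sum_image]
          intro a _ b _ hab; simp only at hab; omega
      _ ≤ ∑ m' ∈ Finset.Ico M' (M' + s.sup id + 1), T j m' := by
          apply Finset.sum_le_sum_of_subset
          intro m' hm'
          simp only [Finset.mem_image] at hm'
          obtain ⟨a, ha, rfl⟩ := hm'
          rw [Finset.mem_Ico]
          have : a ≤ s.sup id := Finset.le_sup (f := id) ha
          omega
  -- the rounds
  have RF : ∀ js : ℕ × ℕ, ∃ pr : ℕ × ℕ, js.2 ≤ pr.1 ∧ js.1+1 ≤ pr.1 ∧
      1 ≤ ∑ m ∈ Finset.Ico pr.1 pr.2, T js.1 m := by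
    intro js
    obtain ⟨M', L, h1, h2, h3⟩ := L2 js.1 js.2
    exact ⟨(M', L), h1, h2, h3⟩
  choose RFf hRF1 hRF2 hRF3 using RF
  set rounds : ℕ → ℕ × ℕ :=
    fun j => Nat.rec (RFf (0, 0)) (fun j ih => RFf (j+1, ih.2)) j with hroundsdef
  set lo : ℕ → ℕ := fun j => (rounds j).1 with hlodef
  set hi : ℕ → ℕ := fun j => (rounds j).2 with hhidef
  have hrounds0 : rounds 0 = RFf (0,0) := rfl
  have hroundsS : ∀ j, rounds (j+1) = RFf (j+1, hi j) := fun j => rfl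
  have hr0 : ∀ j, 1 ≤ ∑ m ∈ Finset.Ico (lo j) (hi j), T j m := by
    intro j
    cases j with
    | zero => exact hRF3 (0,0)
    | succ j => exact hRF3 (j+1, hi j)
  have hlo1 : ∀ j, j+1 ≤ lo j := by
    intro j
    cases j with
    | zero => exact hRF2 (0,0)
    | succ j => exact hRF2 (j+1, hi j)
  have hlohi : ∀ j, lo j ≤ hi j := by
    intro j
    by_contra hcon
    push_neg at hcon
    have : Finset.Ico (lo j) (hi j) = ∅ := Finset.Ico_eq_empty (by omega)
    have h1 := hr0 j
    rw [this, Finset.sum_empty] at h1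
    simp at h1
  have hchain : ∀ j, hi j ≤ lo (j+1) := by
    intro j
    exact hRF1 (j+1, hi j)
  have horder : ∀ j j', j < j' → hi j ≤ lo j' := by
    intro j j' hjj
    induction j' with
    | zero => omega
    | succ j'' ih =>
      rcases Nat.lt_or_ge j j'' with h | h
      · exact le_trans (ih h) (le_trans (hlohi j'') (hchain j''))
      · have : j = j'' := by omega
        rw [this]; exact hchain j''
  set used : ℕ → Prop := fun m => ∃ j, lo j ≤ m ∧ m < hi j with huseddef
  set r : ℕ → ℕ := fun m => if h : used m then h.choose else 0 with hrdef
  have hrspec : ∀ m j, lo j ≤ m → m < hi j → r m = j := by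
    intro m j h1 h2
    have hu : used m := ⟨j, h1, h2⟩
    have hs := hu.choose_spec
    have hre : r m = hu.choose := dif_pos hu
    rw [hre]
    by_contra hne
    rcases Nat.lt_or_ge hu.choose j with hlt | hge
    · have := horder _ _ hlt
      omega
    · have hgt : j < hu.choose := lt_of_le_of_ne hge (Ne.symm hne)
      have := horder _ _ hgt
      omega
  have hrange : ∀ m, used m → lo (r m) ≤ m ∧ m < hi (r m) := by
    intro m hu
    have hs := hu.choose_spec
    have : r m = hu.choose := dif_pos hu
    rw [this]
    exact hs
  have hrmlt : ∀ m, used m → ((r m : ℝ) + 1) < 2^m := by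
    intro m hu
    have h1 := (hrange m hu).1
    have h2 := hlo1 (r m)
    have h3 : r m + 1 ≤ m := le_trans h2 h1
    have h4 : m < 2^m := Nat.lt_two_pow_self
    have h5 : r m + 1 < 2^m := by omega
    calc ((r m : ℝ) + 1) < ((2:ℕ)^m : ℕ) := by exact_mod_cast h5
      _ = (2:ℝ)^m := by push_cast; ring
  -- per-level partitions
  have key : ∀ m : ℕ, ∃ (p : ℕ) (P : Fin p → Set (EucSp n)),
      (∀ i, MeasurableSet (P i)) ∧ (∀ i, P i ⊆ D m) ∧
      (∀ i i', i ≠ i' → Disjoint (P i) (P i')) ∧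
      (∀ i, 0 < volume (P i) ∧
        volume (P i) ≤ ENNReal.ofReal (α ((2:ℝ)^m / ((r m : ℝ)+1)))) ∧
      (used m ∧ 0 < volume (D m) → ∑ i, volume (P i) = volume (D m)) ∧
      (0 < p → used m) := by
    intro m
    by_cases hm : used m ∧ 0 < volume (D m)
    · have hαpos : 0 < ENNReal.ofReal (α ((2:ℝ)^m / ((r m : ℝ)+1))) := by
        rw [ENNReal.ofReal_pos]
        apply hα
        rw [lt_div_iff₀ (by positivity)]
        rw [one_mul]
        exact hrmlt m hm.1
      obtain ⟨p, P, h1, h2, h3, h4, h5⟩ :=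
        stmt5_partition_small hn1 (D m) (hDm m) (hDsub m) _ hαpos
      exact ⟨p, P, h1, h2, h3, h4, fun _ => h5, fun _ => hm.1⟩
    · refine ⟨0, Fin.elim0, ?_, ?_, ?_, ?_, ?_, ?_⟩
      · intro i; exact i.elim0
      · intro i; exact i.elim0
      · intro i; exact i.elim0
      · intro i; exact i.elim0
      · intro h; exact absurd h hm
      · intro h; omega
  choose p P hPm hPsub hPdisj hPb hPsum hPused using key
  -- the index type
  set I := (Σ m : ℕ, Fin (p m)) with hIdef
  have hIlev : ∀ j : ℕ, ∃ m, j < m ∧ 0 < p m := by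
    intro j
    by_contra hcon
    push_neg at hcon
    have hz : ∀ m ∈ Finset.Ico (lo j) (hi j), T j m = 0 := by
      intro m hm
      rw [Finset.mem_Ico] at hm
      have hjm : j < m := by
        have := hlo1 j; omega
      have hp0 : p m = 0 := by have := hcon m hjm; omega
      have hvol : volume (D m) = 0 := by
        by_contra hv
        have hv' : 0 < volume (D m) := pos_iff_ne_zero.mpr hv
        have hu : used m := ⟨j, hm.1, hm.2⟩
        have hsum0 : ∑ i : Fin (p m), volume (P m i) = 0 := by
          apply Finset.sum_eq_zero
          intro i _
          exact absurd i.pos (by omega)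
        have := hPsum m ⟨hu, hv'⟩
        rw [hsum0] at this
        exact hv this.symm
      rw [hTdef]
      simp [hvol]
    have h1 := hr0 j
    rw [Finset.sum_eq_zero hz] at h1
    simp at h1
  haveI : Infinite I := by
    have hinf : {m | 0 < p m}.Infinite := by
      apply Set.infinite_of_not_bddAbove
      rintro ⟨b, hb⟩
      obtain ⟨m, hm1, hm2⟩ := hIlev b
      exact absurd (hb hm2) (by omega)
    haveI := Set.infinite_coe_iff.mpr hinf
    exact Infinite.of_injective
      (fun m : {m | 0 < p m} => (⟨m.1, ⟨0, m.2⟩⟩ : I))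
      (by
        intro a b hab
        have := congrArg Sigma.fst hab
        exact Subtype.ext this)
  letI : Denumerable I := Denumerable.ofEncodableOfInfinite I
  set e : ℕ ≃ I := (Denumerable.eqv I).symm with hedef
  have husedk : ∀ k : ℕ, used (e k).1 := fun k => hPused _ (e k).2.pos
  refine ⟨fun k => P (e k).1 (e k).2, fun k => (2:ℝ)^((e k).1),
    fun k => ((r ((e k).1) : ℝ)+1), ?_, ?_, ?_, ?_, ?_, ?_, ?_, ?_⟩
  · intro k; exact hPm _ _
  · -- disjointness
    intro k k' hkk
    have hne : e k ≠ e k' := fun h => hkk (e.injective h)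
    rw [← Set.disjoint_iff_inter_eq_empty]
    have hd : ∀ (σ σ' : I), σ ≠ σ' → Disjoint (P σ.1 σ.2) (P σ'.1 σ'.2) := by
      rintro ⟨m, i⟩ ⟨m', i'⟩ hne2
      rcases eq_or_ne m m' with rfl | hmm
      · have hii : i ≠ i' := by
          intro hcontr
          exact hne2 (by rw [hcontr])
        exact hPdisj m i i' hii
      · exact (hDdisj m m' hmm).mono (hPsub m i) (hPsub m' i')
    exact hd _ _ hne
  · intro k; positivity
  · intro k
    exact hrmlt _ (husedk k)
  · intro k x hx
    exact (hDf _ x (hPsub _ _ hx)).1.le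
  · -- tendsto
    rw [Filter.tendsto_atTop]
    intro b
    rw [← Nat.cofinite_eq_atTop, Filter.eventually_cofinite]
    set C := ⌈b⌉₊ with hCdef
    set B := Finset.sup (Finset.range C) hi with hBdef
    set Q := Finset.sup (Finset.range B) p with hQdef
    have hfinI : {σ : I | σ.1 < B}.Finite := by
      apply Set.Finite.of_finite_image (f := fun σ : I => ((σ.1 : ℕ), (σ.2 : ℕ)))
      · apply Set.Finite.subset ((Set.finite_Iio B).prod (Set.finite_Iio (Q+1)))
        rintro ⟨a, b2⟩ ⟨σ, hσ, hFeq⟩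
        simp only [Prod.mk.injEq] at hFeq
        obtain ⟨h1', h2'⟩ := hFeq
        constructor
        · rw [← h1']; exact hσ
        · rw [← h2']
          simp only [Set.mem_Iio]
          have h3 : (σ.2 : ℕ) < p σ.1 := σ.2.2
          have h4 : p σ.1 ≤ Q :=
            Finset.le_sup (f := p) (Finset.mem_range.mpr hσ)
          omega
      · rintro ⟨m, i⟩ _ ⟨m', i'⟩ _ heq
        simp only [Prod.mk.injEq] at heq
        obtain ⟨h1', h2'⟩ := heq
        subst h1'
        exact congrArg (Sigma.mk m) (Fin.ext h2')
    apply Set.Finite.subset (Set.Finite.preimage (e.injective.injOn) hfinI)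
    intro k hk
    simp only [Set.mem_setOf_eq, not_le] at hk
    simp only [Set.mem_preimage, Set.mem_setOf_eq]
    have h1 : r ((e k).1) < C := by
      have hbc : b ≤ (C : ℝ) := Nat.le_ceil b
      have : ((r ((e k).1) : ℝ)) + 1 < (C:ℝ) + 1 := by linarith
      exact_mod_cast (by linarith : ((r ((e k).1) : ℝ)) < (C:ℝ))
    have h2 := (hrange _ (husedk k)).2
    have h3 : hi (r ((e k).1)) ≤ B :=
      Finset.le_sup (f := hi) (Finset.mem_range.mpr h1)
    omega
  · intro k
    exact hPb _ _
  · -- the divergent sum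
    set S : I → ℝ≥0∞ := fun σ =>
      ENNReal.ofReal (Φ ((2:ℝ)^(σ.1) / ((r σ.1 : ℝ)+1))) * volume (P σ.1 σ.2) with hSdef
    have hrw : (∑' k : ℕ, S (e k)) = ∑' σ : I, S σ := e.tsum_eq S
    show (∑' k : ℕ, S (e k)) = ⊤
    rw [hrw, ENNReal.tsum_sigma' S]
    set W : ℕ → ℝ≥0∞ := fun m => ∑' i : Fin (p m), S ⟨m, i⟩ with hWdef
    show (∑' m, W m) = ⊤
    have hW : ∀ m, W m =
        ENNReal.ofReal (Φ ((2:ℝ)^m / ((r m : ℝ)+1))) * ∑ i, volume (P m i) := by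
      intro m
      rw [hWdef]
      simp only
      rw [tsum_fintype, Finset.mul_sum]
    by_contra hne
    obtain ⟨n0, hn0⟩ := ENNReal.exists_nat_gt hne
    have hblock : ∀ j, 1 ≤ ∑ m ∈ Finset.Ico (lo j) (hi j), W m := by
      intro j
      refine le_trans (hr0 j) (Finset.sum_le_sum fun m hm => ?_)
      rw [Finset.mem_Ico] at hm
      rw [hW m]
      rcases eq_or_ne (volume (D m)) 0 with hv | hv
      · rw [hTdef]
        simp [hv]
      · have hu : used m := ⟨j, hm.1, hm.2⟩
        have hr' : r m = j := hrspec m j hm.1 hm.2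
        rw [hPsum m ⟨hu, pos_iff_ne_zero.mpr hv⟩, hr']
    have hdisjIco : Set.PairwiseDisjoint ↑(Finset.range n0)
        (fun j => Finset.Ico (lo j) (hi j)) := by
      intro a _ b2 _ hab
      have keyd : ∀ u v : ℕ, u < v →
          Disjoint (Finset.Ico (lo u) (hi u)) (Finset.Ico (lo v) (hi v)) := by
        intro u v huv
        rw [Finset.disjoint_left]
        intro m hm1 hm2
        rw [Finset.mem_Ico] at hm1 hm2
        have := horder u v huv
        omega
      rcases Nat.lt_or_ge a b2 with h | h
      · exact keyd a b2 h
      · exact (keyd b2 a (lt_of_le_of_ne h (Ne.symm hab))).symm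
    have hle : (n0:ℝ≥0∞) ≤ ∑' m, W m := by
      calc (n0:ℝ≥0∞) = ∑ _j ∈ Finset.range n0, (1:ℝ≥0∞) := by simp
        _ ≤ ∑ j ∈ Finset.range n0, ∑ m ∈ Finset.Ico (lo j) (hi j), W m :=
            Finset.sum_le_sum fun j _ => hblock j
        _ = ∑ m ∈ (Finset.range n0).biUnion (fun j => Finset.Ico (lo j) (hi j)), W m :=
            (Finset.sum_biUnion hdisjIco).symm
        _ ≤ ∑' m, W m := ENNReal.sum_le_tsum _
    exact absurd (lt_of_le_of_lt hle hn0) (lt_irrefl _)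

end
end

section
/- Let n ≥ 2 and let Δ be a non-empty family of subsets of ℝⁿ that are uniformly measurable in Jordan sense, with inf_{E∈Δ} |E| > 0. Then for every ε > 0 there exists m₀ ∈ ℕⁿ such that for every E ∈ Δ and every m ≥ m₀ (componentwise): |⋃{Q ∈ W_m : Q ⊂ E}| > (1−ε)|E| and |⋃{Q ∈ W_m : Q ∩ E ≠ ∅}| < (1+ε)|E|. -/
open MeasureTheory Set Filter Topology Metric ENNReal

noncomputable section

/-- `Δ` consists of sets uniformly measurable in Jordan sense. -/
def UnifJordan {n : ℕ} (Δ : Set (Set (EucSp n))) : Prop :=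
  ∀ ε : ℝ, 0 < ε → ∃ (k : ℕ) (r : ℝ), 0 < r ∧ (k : ℝ) * r ^ n < ε ∧
    ∀ E ∈ Δ, ∃ c : Fin k → EucSp n, frontier E ⊆ ⋃ i, Metric.ball (c i) r

lemma preconn_frontier {n : ℕ} {Q E : Set (EucSp n)} (hQ : IsPreconnected Q)
    (h1 : (Q ∩ E).Nonempty) (h2 : ¬ Q ⊆ E) : (Q ∩ frontier E).Nonempty := by
  by_contra h
  rw [Set.not_nonempty_iff_eq_empty] at h
  have hdis : ∀ x ∈ Q, x ∉ frontier E := fun x hx hf =>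
    (Set.eq_empty_iff_forall_notMem.1 h x) ⟨hx, hf⟩
  have hsub : Q ⊆ interior E ∪ (closure E)ᶜ := by
    intro x hx
    by_cases hxc : x ∈ closure E
    · left
      by_contra hxi
      exact hdis x hx ⟨hxc, hxi⟩
    · exact Or.inr hxc
  obtain ⟨x2, hx2Q, hx2E⟩ := Set.not_subset.1 h2
  have hne1 : (Q ∩ interior E).Nonempty := by
    obtain ⟨x, hxQ, hxE⟩ := h1
    rcases hsub hxQ with h' | h'
    · exact ⟨x, hxQ, h'⟩
    · exact absurd (subset_closure hxE) h'
  have hne2 : (Q ∩ (closure E)ᶜ).Nonempty := by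
    rcases hsub hx2Q with h' | h'
    · exact absurd (interior_subset h') hx2E
    · exact ⟨x2, hx2Q, h'⟩
  obtain ⟨y, _, hyi, hyc⟩ := hQ _ _ isOpen_interior (isClosed_closure.isOpen_compl) hsub hne1 hne2
  exact hyc (subset_closure (interior_subset hyi))

lemma combo_mem_Ioo {a b u v s t : ℝ} (h1 : a < u ∧ u < b) (h2 : a < v ∧ v < b)
    (hs : 0 ≤ s) (ht : 0 ≤ t) (hst : s + t = 1) :
    a < s * u + t * v ∧ s * u + t * v < b := by
  have key1 : s * a + t * a = a := by rw [← add_mul, hst, one_mul]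
  have key2 : s * b + t * b = b := by rw [← add_mul, hst, one_mul]
  rcases eq_or_lt_of_le hs with hs0 | hs0
  · have hs0' : s = 0 := hs0.symm
    have ht1 : t = 1 := by linarith
    subst hs0'; subst ht1
    constructor <;> linarith [h2.1, h2.2]
  · rcases eq_or_lt_of_le ht with ht0 | ht0
    · have ht0' : t = 0 := ht0.symm
      have hs1 : s = 1 := by linarith
      subst ht0'; subst hs1
      constructor <;> linarith [h1.1, h1.2]
    · constructor <;> linarith [mul_lt_mul_of_pos_left h1.1 hs0,
        mul_lt_mul_of_pos_left h2.1 ht0, mul_lt_mul_of_pos_left h1.2 hs0,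
        mul_lt_mul_of_pos_left h2.2 ht0]

lemma cube_convex {n : ℕ} (a b : Fin n → ℝ) :
    Convex ℝ {x : EucSp n | ∀ j, a j < x j ∧ x j < b j} := by
  intro x hx y hy s t hs ht hst j
  have happ : (s • x + t • y) j = s * x j + t * y j := rfl
  rw [happ]
  exact combo_mem_Ioo (hx j) (hy j) hs ht hst

lemma hyperplane_null {n : ℕ} (j : Fin n) (c : ℝ) :
    volume {x : EucSp n | x j = c} = 0 := by
  have hmp := EuclideanSpace.volume_preserving_symm_measurableEquiv_toLp (Fin n)
  have heq : {x : EucSp n | x j = c}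
      = (MeasurableEquiv.toLp 2 (Fin n → ℝ)).symm ⁻¹' {f : Fin n → ℝ | f j = c} := rfl
  rw [heq, hmp.measure_preimage]
  · rw [volume_pi]
    exact Measure.pi_hyperplane (fun _ => (volume : Measure ℝ)) j c
  · exact (measurableSet_eq_fun (measurable_pi_apply j) measurable_const).nullMeasurableSet

lemma grid_null {n : ℕ} (m : Fin n → ℕ) :
    volume {x : EucSp n | ∃ j, ∃ z : ℤ, x j = (z : ℝ) / 2 ^ m j} = 0 := by
  have hsub : {x : EucSp n | ∃ j, ∃ z : ℤ, x j = (z : ℝ) / 2 ^ m j}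
      ⊆ ⋃ j : Fin n, ⋃ z : ℤ, {x : EucSp n | x j = (z : ℝ) / 2 ^ m j} := by
    rintro x ⟨j, z, hz⟩
    exact Set.mem_iUnion.2 ⟨j, Set.mem_iUnion.2 ⟨z, hz⟩⟩
  exact measure_mono_null hsub
    (measure_iUnion_null fun j => measure_iUnion_null fun z => hyperplane_null j _)

lemma cube_dist {n : ℕ} (hn : 0 < n) {m : Fin n → ℕ} {k : Fin n → ℤ} {M : ℕ}
    (hm : ∀ j, M ≤ m j) {x y : EucSp n}
    (hx : ∀ j, (k j : ℝ) / 2 ^ m j < x j ∧ x j < ((k j : ℝ) + 1) / 2 ^ m j)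
    (hy : ∀ j, (k j : ℝ) / 2 ^ m j < y j ∧ y j < ((k j : ℝ) + 1) / 2 ^ m j) :
    dist x y < Real.sqrt n / 2 ^ M := by
  haveI : Nonempty (Fin n) := Fin.pos_iff_nonempty.1 hn
  have hcoord : ∀ j, |x j - y j| < ((2:ℝ) ^ M)⁻¹ := by
    intro j
    have hc : (0:ℝ) < 2 ^ m j := by positivity
    have hsplit : ((k j : ℝ) + 1) / 2 ^ m j = (k j : ℝ) / 2 ^ m j + ((2:ℝ) ^ m j)⁻¹ := by
      field_simp
    have h1 := hx j; have h2 := hy j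
    rw [hsplit] at h1 h2
    have habs : |x j - y j| < ((2:ℝ) ^ m j)⁻¹ :=
      abs_sub_lt_iff.2 ⟨by linarith [h1.2, h2.1], by linarith [h2.2, h1.1]⟩
    have hle : ((2:ℝ) ^ m j)⁻¹ ≤ ((2:ℝ) ^ M)⁻¹ := by
      apply inv_anti₀ (by positivity)
      exact pow_le_pow_right₀ one_le_two (hm j)
    exact lt_of_lt_of_le habs hle
  rw [EuclideanSpace.dist_eq]
  have hsum : ∑ i, dist (x i) (y i) ^ 2 < (n : ℝ) * (((2:ℝ) ^ M)⁻¹) ^ 2 := by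
    have hlt : ∑ i, dist (x i) (y i) ^ 2 < ∑ _i : Fin n, (((2:ℝ) ^ M)⁻¹) ^ 2 := by
      apply Finset.sum_lt_sum_of_nonempty Finset.univ_nonempty
      intro i _
      rw [Real.dist_eq]
      exact pow_lt_pow_left₀ (hcoord i) (abs_nonneg _) (by norm_num)
    simpa [Finset.sum_const, Finset.card_univ, nsmul_eq_mul] using hlt
  calc Real.sqrt (∑ i, dist (x i) (y i) ^ 2)
      < Real.sqrt ((n:ℝ) * (((2:ℝ)^M)⁻¹)^2) :=
        Real.sqrt_lt_sqrt (Finset.sum_nonneg fun i _ => sq_nonneg _) hsum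
    _ = Real.sqrt n / 2 ^ M := by
        rw [Real.sqrt_mul (Nat.cast_nonneg n), Real.sqrt_sq (by positivity), div_eq_mul_inv]


lemma key_stmt8 {n : ℕ} (hn : 2 ≤ n) (Δ : Set (Set (EucSp n)))
    (hbdd : ∀ E ∈ Δ, Bornology.IsBounded E)
    (hJ : UnifJordan Δ) (t : ℝ) (ht : 0 < t)
    (hinf : ∀ E ∈ Δ, ENNReal.ofReal t ≤ volume E)
    (ε : ℝ) (hε : 0 < ε) (hε2 : ε ≤ 1/2) :
    ∃ m₀ : Fin n → ℕ, ∀ E ∈ Δ, ∀ m : Fin n → ℕ, m₀ ≤ m →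
      ENNReal.ofReal (1 - ε) * volume E < volume (⋃₀ {Q | Q ∈ dyadicW m ∧ Q ⊆ E}) ∧
      volume (⋃₀ {Q | Q ∈ dyadicW m ∧ (Q ∩ E).Nonempty}) < ENNReal.ofReal (1 + ε) * volume E := by
  haveI hnonempty : Nonempty (Fin n) := ⟨⟨0, by omega⟩⟩
  haveI : Nontrivial (EucSp n) := inferInstance
  have hn0 : 0 < n := by omega
  set K := volume (Metric.ball (0 : EucSp n) 1) with hKdef
  have hKlt : K ≠ ⊤ := measure_ball_lt_top.ne
  have hKnn : (0:ℝ) ≤ K.toReal := ENNReal.toReal_nonneg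
  have hK1 : K.toReal + 1 ≠ 0 := by linarith
  set ε' := ε * t / (2 * 2 ^ n * (K.toReal + 1)) with hε'def
  have hε'pos : 0 < ε' := by positivity
  obtain ⟨k, r, hr, hkr, hcov⟩ := hJ ε' hε'pos
  obtain ⟨M, hM⟩ : ∃ M : ℕ, Real.sqrt n / 2 ^ M ≤ r := by
    obtain ⟨M, hM⟩ := pow_unbounded_of_one_lt (Real.sqrt n / r) one_lt_two
    refine ⟨M, ?_⟩
    rw [div_le_iff₀ (by positivity)]
    rw [div_lt_iff₀ hr] at hM
    nlinarith
  refine ⟨fun _ => M, ?_⟩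
  intro E hE m hm
  have hmM : ∀ j, M ≤ m j := fun j => hm j
  obtain ⟨c, hc⟩ := hcov E hE
  set U : Set (EucSp n) := ⋃ i, Metric.ball (c i) (2 * r) with hUdef
  have hUvol : volume U < ENNReal.ofReal (ε * t / 2) := by
    have hball : ∀ i, volume (Metric.ball (c i) (2 * r))
        = ENNReal.ofReal ((2*r) ^ n) * K := by
      intro i
      rw [Measure.addHaar_ball volume (c i) (by positivity : (0:ℝ) ≤ 2*r),
        finrank_euclideanSpace_fin]
    have h1 : volume U ≤ ∑' i : Fin k, volume (Metric.ball (c i) (2 * r)) :=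
      measure_iUnion_le _
    have h2 : ∑' i : Fin k, volume (Metric.ball (c i) (2 * r))
        = (k : ℝ≥0∞) * (ENNReal.ofReal ((2*r)^n) * K) := by
      rw [tsum_fintype]
      simp only [hball]
      rw [Finset.sum_const, Finset.card_univ, Fintype.card_fin, nsmul_eq_mul]
    have hlt : (k : ℝ) * ((2*r)^n * K.toReal) < ε * t / 2 := by
      have e1 : (k:ℝ) * ((2*r)^n * K.toReal) = 2^n * ((k:ℝ) * r^n) * K.toReal := by
        rw [mul_pow]; ring
      have e2 : 2^n * ((k:ℝ) * r^n) * K.toReal ≤ 2^n * ((k:ℝ)*r^n) * (K.toReal + 1) := by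
        apply mul_le_mul_of_nonneg_left (by linarith)
        positivity
      have e3 : 2^n * ((k:ℝ)*r^n) * (K.toReal+1) < 2^n * ε' * (K.toReal+1) := by
        apply mul_lt_mul_of_pos_right _ (by linarith)
        exact mul_lt_mul_of_pos_left hkr (by positivity)
      have e4 : 2^n * ε' * (K.toReal+1) = ε*t/2 := by
        rw [hε'def]
        field_simp
      rw [e1]
      linarith
    have h3 : (k : ℝ≥0∞) * (ENNReal.ofReal ((2*r)^n) * K)
        = ENNReal.ofReal ((k : ℝ) * ((2*r)^n * K.toReal)) := by
      rw [ENNReal.ofReal_mul (by positivity), ENNReal.ofReal_mul (by positivity),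
        ENNReal.ofReal_natCast, ENNReal.ofReal_toReal hKlt]
    calc volume U ≤ (k : ℝ≥0∞) * (ENNReal.ofReal ((2*r)^n) * K) := h2 ▸ h1
      _ = ENNReal.ofReal ((k : ℝ) * ((2*r)^n * K.toReal)) := h3
      _ < ENNReal.ofReal (ε * t / 2) :=
          (ENNReal.ofReal_lt_ofReal_iff (by positivity)).2 hlt
  set G : Set (EucSp n) := {x | ∃ j, ∃ z : ℤ, x j = (z:ℝ)/2^ m j} with hGdef
  have hGnull : volume G = 0 := grid_null m
  have hfloor : ∀ x : EucSp n, x ∉ G → ∀ j,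
      ((⌊x j * 2 ^ m j⌋ : ℝ)) / 2 ^ m j < x j ∧
        x j < ((⌊x j * 2 ^ m j⌋ : ℝ) + 1) / 2 ^ m j := by
    intro x hxG j
    have hcpos : (0:ℝ) < 2 ^ m j := by positivity
    have hnef : (⌊x j * 2 ^ m j⌋ : ℝ) ≠ x j * 2 ^ m j := by
      intro heq
      refine hxG ⟨j, ⌊x j * 2 ^ m j⌋, ?_⟩
      rw [heq, mul_div_assoc, div_self hcpos.ne', mul_one]
    constructor
    · rw [div_lt_iff₀ hcpos]
      exact lt_of_le_of_ne (Int.floor_le _) hnef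
    · rw [lt_div_iff₀ hcpos]
      exact Int.lt_floor_add_one _
  have hnear : ∀ (kk : Fin n → ℤ) (x : EucSp n),
      (∀ j, (kk j : ℝ) / 2 ^ m j < x j ∧ x j < ((kk j : ℝ) + 1) / 2 ^ m j) →
      ({y : EucSp n | ∀ j, (kk j : ℝ) / 2 ^ m j < y j ∧
          y j < ((kk j : ℝ) + 1) / 2 ^ m j} ∩ E).Nonempty →
      ¬ {y : EucSp n | ∀ j, (kk j : ℝ) / 2 ^ m j < y j ∧
          y j < ((kk j : ℝ) + 1) / 2 ^ m j} ⊆ E → x ∈ U := by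
    intro kk x hxQ hQE hQE'
    obtain ⟨y, hyQ, hyf⟩ := preconn_frontier
      ((cube_convex (fun j => (kk j : ℝ) / 2 ^ m j)
        (fun j => ((kk j : ℝ) + 1) / 2 ^ m j)).isPreconnected) hQE hQE'
    obtain ⟨i, hi⟩ := Set.mem_iUnion.1 (hc hyf)
    refine Set.mem_iUnion.2 ⟨i, ?_⟩
    rw [Metric.mem_ball] at hi ⊢
    have hd := cube_dist hn0 hmM hxQ hyQ
    calc dist x (c i) ≤ dist x y + dist y (c i) := dist_triangle _ _ _
      _ < r + r := add_lt_add (lt_of_lt_of_le hd hM) hi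
      _ = 2 * r := by ring
  have hEfin : volume E ≠ ⊤ := (hbdd E hE).measure_lt_top.ne
  set A := ⋃₀ {Q | Q ∈ dyadicW m ∧ Q ⊆ E} with hAdef
  set Bo := ⋃₀ {Q | Q ∈ dyadicW m ∧ (Q ∩ E).Nonempty} with hBdef
  have hAE : A ⊆ E := Set.sUnion_subset fun Q hQ => hQ.2
  have hsubI : E ⊆ A ∪ (G ∪ U) := by
    intro x hxE
    by_cases hxG : x ∈ G
    · exact Or.inr (Or.inl hxG)
    · have hxQ := hfloor x hxG
      by_cases hQE : {y : EucSp n | ∀ j, ((⌊x j * 2 ^ m j⌋ : ℝ)) / 2 ^ m j < y j ∧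
          y j < ((⌊x j * 2 ^ m j⌋ : ℝ) + 1) / 2 ^ m j} ⊆ E
      · exact Or.inl (Set.mem_sUnion.2 ⟨_, ⟨⟨fun j => ⌊x j * 2 ^ m j⌋, rfl⟩, hQE⟩, hxQ⟩)
      · exact Or.inr (Or.inr (hnear _ x hxQ ⟨x, hxQ, hxE⟩ hQE))
  have hsubO : Bo ⊆ E ∪ U := by
    intro x hx
    obtain ⟨Q, ⟨⟨kk, rfl⟩, hQE⟩, hxQ⟩ := hx
    by_cases hsub : {y : EucSp n | ∀ j, (kk j : ℝ) / 2 ^ m j < y j ∧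
        y j < ((kk j : ℝ) + 1) / 2 ^ m j} ⊆ E
    · exact Or.inl (hsub hxQ)
    · exact Or.inr (hnear kk x hxQ hQE hsub)
  set V := (volume E).toReal with hVdef
  have hVE : volume E = ENNReal.ofReal V := (ENNReal.ofReal_toReal hEfin).symm
  have htV : t ≤ V := by
    have h := hinf E hE
    rw [hVE] at h
    exact (ENNReal.ofReal_le_ofReal_iff ENNReal.toReal_nonneg).1 h
  have hAfin : volume A ≠ ⊤ :=
    (lt_of_le_of_lt (measure_mono hAE) (lt_top_iff_ne_top.2 hEfin)).ne
  have hUE : volume E ≤ volume A + volume U := by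
    calc volume E ≤ volume (A ∪ (G ∪ U)) := measure_mono hsubI
      _ ≤ volume A + volume (G ∪ U) := measure_union_le _ _
      _ ≤ volume A + (volume G + volume U) := add_le_add_right (measure_union_le _ _) _
      _ = volume A + volume U := by rw [hGnull, zero_add]
  constructor
  · have hstep : ENNReal.ofReal (1-ε) * volume E + ENNReal.ofReal (ε*t/2) ≤ volume E := by
      rw [hVE, ← ENNReal.ofReal_mul (by linarith),
        ← ENNReal.ofReal_add (mul_nonneg (by linarith) ENNReal.toReal_nonneg) (by positivity)]
      refine ENNReal.ofReal_le_ofReal ?_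
      nlinarith [mul_le_mul_of_nonneg_left htV hε.le]
    have hlt2 : volume E < volume A + ENNReal.ofReal (ε*t/2) :=
      lt_of_le_of_lt hUE (ENNReal.add_lt_add_left hAfin hUvol)
    exact (ENNReal.add_lt_add_iff_right ENNReal.ofReal_ne_top).1
      (lt_of_le_of_lt hstep hlt2)
  · have hO : volume Bo ≤ volume E + volume U :=
      le_trans (measure_mono hsubO) (measure_union_le _ _)
    have hO2 : volume Bo < volume E + ENNReal.ofReal (ε*t/2) :=
      lt_of_le_of_lt hO (ENNReal.add_lt_add_left hEfin hUvol)
    have hO3 : volume E + ENNReal.ofReal (ε*t/2) ≤ ENNReal.ofReal (1+ε) * volume E := by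
      rw [hVE, ← ENNReal.ofReal_add ENNReal.toReal_nonneg (by positivity),
        ← ENNReal.ofReal_mul (by linarith)]
      refine ENNReal.ofReal_le_ofReal ?_
      nlinarith [mul_le_mul_of_nonneg_left htV hε.le]
    exact lt_of_lt_of_le hO2 hO3

theorem stmt8 {n : ℕ} (hn : 2 ≤ n) (Δ : Set (Set (EucSp n))) (hne : Δ.Nonempty)
    (hmeas : ∀ E ∈ Δ, MeasurableSet E) (hbdd : ∀ E ∈ Δ, Bornology.IsBounded E)
    (hJ : UnifJordan Δ) (t : ℝ) (ht : 0 < t)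
    (hinf : ∀ E ∈ Δ, ENNReal.ofReal t ≤ volume E) :
    ∀ ε : ℝ, 0 < ε → ∃ m₀ : Fin n → ℕ, ∀ E ∈ Δ, ∀ m : Fin n → ℕ, m₀ ≤ m →
      ENNReal.ofReal (1 - ε) * volume E < volume (⋃₀ {Q | Q ∈ dyadicW m ∧ Q ⊆ E}) ∧
      volume (⋃₀ {Q | Q ∈ dyadicW m ∧ (Q ∩ E).Nonempty}) < ENNReal.ofReal (1 + ε) * volume E := by
  intro ε hε
  obtain ⟨m₀, h⟩ := key_stmt8 hn Δ hbdd hJ t ht hinf (min ε (1/2))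
    (lt_min hε (by norm_num)) (min_le_right _ _)
  refine ⟨m₀, fun E hE m hm => ?_⟩
  obtain ⟨h1, h2⟩ := h E hE m hm
  constructor
  · refine lt_of_le_of_lt (mul_le_mul_left
      (ENNReal.ofReal_le_ofReal ?_) _) h1
    have := min_le_left ε (1/2)
    linarith
  · refine lt_of_lt_of_le h2 (mul_le_mul_left
      (ENNReal.ofReal_le_ofReal ?_) _)
    have := min_le_left ε (1/2)
    linarith

end
end

section
/- Let n ≥ 2 and let B be a translation invariant differentiation basis in ℝⁿ. Then the family Δ(B) = {B(γ) : γ ∈ Γ_n} of all rotated copies of B has the M_{Φ_B}-property. -/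
open MeasureTheory Set Filter Topology Metric ENNReal

noncomputable section

/- ===================== Auxiliary lemmas ===================== -/

section Stmt9Aux

variable {n : ℕ}

lemma stmt9_isometry_addLeft (a : EucSp n) : Isometry (fun y : EucSp n => a + y) :=
  Isometry.of_dist_eq fun x y => by simp [dist_add_left]

lemma stmt9_image_addLeft_eq_preimage (a : EucSp n) (S : Set (EucSp n)) :
    (fun y : EucSp n => a + y) '' S = (fun y : EucSp n => -a + y) ⁻¹' S := by
  ext y
  constructor
  · rintro ⟨z, hz, rfl⟩; simpa using hz
  · intro hy; exact ⟨-a + y, hy, add_neg_cancel_left a y⟩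

lemma stmt9_vol_image_addLeft (a : EucSp n) {S : Set (EucSp n)}
    (hS : NullMeasurableSet S volume) :
    volume ((fun y : EucSp n => a + y) '' S) = volume S := by
  rw [stmt9_image_addLeft_eq_preimage]
  exact (measurePreserving_add_left volume (-a)).measure_preimage hS

lemma stmt9_image_rot_eq_preimage (γ : EucSp n ≃ₗᵢ[ℝ] EucSp n) (S : Set (EucSp n)) :
    γ '' S = γ.symm ⁻¹' S := by
  ext y
  constructor
  · rintro ⟨z, hz, rfl⟩; simpa using hz
  · intro hy; exact ⟨γ.symm y, hy, by simp⟩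

lemma stmt9_vol_image_rot (γ : EucSp n ≃ₗᵢ[ℝ] EucSp n) {S : Set (EucSp n)}
    (hS : NullMeasurableSet S volume) :
    volume (γ '' S) = volume S := by
  rw [stmt9_image_rot_eq_preimage]
  exact γ.symm.measurePreserving.measure_preimage hS

lemma stmt9_meas_image_addLeft (a : EucSp n) {S : Set (EucSp n)} (hS : MeasurableSet S) :
    MeasurableSet ((fun y : EucSp n => a + y) '' S) := by
  rw [stmt9_image_addLeft_eq_preimage]
  exact hS.preimage (measurable_const_add _)

lemma stmt9_meas_image_rot (γ : EucSp n ≃ₗᵢ[ℝ] EucSp n) {S : Set (EucSp n)}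
    (hS : MeasurableSet S) :
    MeasurableSet (γ '' S) := by
  rw [stmt9_image_rot_eq_preimage]
  exact hS.preimage γ.symm.continuous.measurable

lemma stmt9_image_addLeft_ball (a c : EucSp n) (ρ : ℝ) :
    (fun y : EucSp n => a + y) '' Metric.ball c ρ = Metric.ball (a + c) ρ := by
  have key : ∀ y : EucSp n, -a + y - c = y - (a + c) := fun y => by abel
  rw [stmt9_image_addLeft_eq_preimage]
  ext y
  simp only [mem_preimage, Metric.mem_ball, dist_eq_norm, key]

lemma stmt9_image_rot_ball (γ : EucSp n ≃ₗᵢ[ℝ] EucSp n) (c : EucSp n) (ρ : ℝ) :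
    γ '' Metric.ball c ρ = Metric.ball (γ c) ρ := by
  rw [stmt9_image_rot_eq_preimage]
  ext y
  have hd : dist (γ.symm y) c = dist y (γ c) := by
    conv_lhs => rw [show c = γ.symm (γ c) by simp]
    exact γ.symm.dist_map y (γ c)
  simp only [mem_preimage, Metric.mem_ball, hd]

lemma stmt9_image_addLeft_addLeft (a : EucSp n) (V : Set (EucSp n)) :
    (fun y : EucSp n => a + y) '' ((fun y : EucSp n => -a + y) '' V) = V := by
  rw [← Set.image_comp]
  have : ((fun y : EucSp n => a + y) ∘ fun y : EucSp n => -a + y) = id := by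
    funext y; simp
  rw [this, Set.image_id]

lemma stmt9_vol_inter_image_addLeft (a : EucSp n) {V S : Set (EucSp n)}
    (hV : MeasurableSet V) (hS : MeasurableSet S) :
    volume (V ∩ (fun y : EucSp n => a + y) '' S)
      = volume ((fun y : EucSp n => -a + y) '' V ∩ S) := by
  have hinj : Function.Injective (fun y : EucSp n => a + y) := fun x y hxy => by
    simpa using hxy
  have him : (fun y : EucSp n => a + y) '' ((fun y : EucSp n => -a + y) '' V ∩ S)
      = V ∩ (fun y : EucSp n => a + y) '' S := by
    rw [Set.image_inter hinj, stmt9_image_addLeft_addLeft]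
  rw [← him, stmt9_vol_image_addLeft a
    (((stmt9_meas_image_addLeft (-a) hV).inter hS).nullMeasurableSet)]

lemma stmt9_image_rot_rot (γ : EucSp n ≃ₗᵢ[ℝ] EucSp n) (V : Set (EucSp n)) :
    γ '' (γ.symm '' V) = V := by
  rw [← Set.image_comp]
  have : (⇑γ ∘ ⇑γ.symm) = id := by funext y; simp
  rw [this, Set.image_id]

lemma stmt9_vol_inter_image_rot (γ : EucSp n ≃ₗᵢ[ℝ] EucSp n) {A S : Set (EucSp n)}
    (hA : MeasurableSet A) (hS : MeasurableSet S) :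
    volume (A ∩ γ '' S) = volume (γ.symm '' A ∩ S) := by
  have him : γ '' (γ.symm '' A ∩ S) = A ∩ γ '' S := by
    rw [Set.image_inter γ.injective, stmt9_image_rot_rot]
  rw [← him, stmt9_vol_image_rot γ
    (((stmt9_meas_image_rot γ.symm hA).inter hS).nullMeasurableSet)]

lemma stmt9_maxTrunc_indFun (C : BasisMap n) (s : ℝ) {h : ℝ} (hh : 0 ≤ h)
    {V : Set (EucSp n)} (hV : MeasurableSet V) (x : EucSp n) :
    maxTrunc C s (indFun V h) x =
      ⨆ (R : Set (EucSp n)) (_ : R ∈ C x ∧ Metric.diam R < s),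
        ENNReal.ofReal h * volume (V ∩ R) / volume R := by
  refine iSup_congr fun R => iSup_congr fun _ => ?_
  congr 1
  have heq : ∀ y, ENNReal.ofReal |indFun V h y| = V.indicator (fun _ => ENNReal.ofReal h) y := by
    intro y
    by_cases hy : y ∈ V <;> simp [indFun, hy, abs_of_nonneg hh]
  rw [lintegral_congr heq, lintegral_indicator hV, setLIntegral_const,
    Measure.restrict_apply hV]

lemma stmt9_exists_translate_small (R : Set (EucSp n)) (hR : MeasurableSet R)
    (hfin : volume R ≠ ⊤) {η : ℝ≥0∞} (hη : η ≠ 0) :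
    ∃ δ > 0, ∀ v : EucSp n, ‖v‖ < δ →
      volume ((fun y : EucSp n => v + y) '' R \ R) ≤ η := by
  have hη2 : η / 2 ≠ 0 := by simp [ENNReal.div_eq_zero_iff, hη]
  obtain ⟨K, hKR, hK, hKv⟩ : ∃ K ⊆ R, IsCompact K ∧ volume R < volume K + η / 2 :=
    hR.exists_isCompact_lt_add hfin hη2
  obtain ⟨O, hRO, hO, hOv⟩ := R.exists_isOpen_lt_add hfin hη2
  obtain ⟨δ, hδ0, hthick⟩ := hK.exists_thickening_subset_open hO (hKR.trans hRO)
  refine ⟨δ, hδ0, fun v hv => ?_⟩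
  have hsub : (fun y : EucSp n => v + y) '' R \ R ⊆
      ((fun y : EucSp n => v + y) '' (R \ K)) ∪ (O \ R) := by
    rintro y ⟨⟨z, hz, rfl⟩, hyR⟩
    by_cases hzK : z ∈ K
    · right
      refine ⟨hthick (Metric.mem_thickening_iff.2 ⟨z, hzK, ?_⟩), hyR⟩
      simpa [dist_eq_norm] using hv
    · left; exact ⟨z, ⟨hz, hzK⟩, rfl⟩
  have h1 : volume ((fun y : EucSp n => v + y) '' (R \ K)) ≤ η / 2 := by
    rw [stmt9_vol_image_addLeft v ((hR.diff hK.measurableSet).nullMeasurableSet)]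
    have hKfin : volume K ≠ ⊤ := ((measure_mono hKR).trans_lt hfin.lt_top).ne
    rw [measure_diff hKR hK.measurableSet.nullMeasurableSet hKfin]
    exact tsub_le_iff_right.2 (by rw [add_comm]; exact hKv.le)
  have h2 : volume (O \ R) ≤ η / 2 := by
    rw [measure_diff hRO hR.nullMeasurableSet hfin]
    exact tsub_le_iff_right.2 (by rw [add_comm]; exact hOv.le)
  calc volume ((fun y : EucSp n => v + y) '' R \ R)
      ≤ volume (((fun y : EucSp n => v + y) '' (R \ K)) ∪ (O \ R)) := measure_mono hsub
    _ ≤ volume ((fun y : EucSp n => v + y) '' (R \ K)) + volume (O \ R) :=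
        measure_union_le _ _
    _ ≤ η / 2 + η / 2 := add_le_add h1 h2
    _ = η := ENNReal.add_halves η

lemma stmt9_maxTrunc_mono_trunc (C : BasisMap n) {s₁ s₂ : ℝ} (hs : s₁ ≤ s₂)
    (f : EucSp n → ℝ) (x : EucSp n) :
    maxTrunc C s₁ f x ≤ maxTrunc C s₂ f x := by
  refine iSup_mono fun R => ?_
  exact iSup_le fun hp => le_iSup_of_le ⟨hp.1, hp.2.trans_le hs⟩ le_rfl

lemma stmt9_levelset_subset_ball (B : BasisMap n) (hB : IsDiffBasis B) (s r : ℝ)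
    {h : ℝ} (hh : 0 ≤ h) :
    {x : EucSp n | 1 < maxTrunc B s (indFun (Metric.ball (0:EucSp n) r) h) x}
      ⊆ Metric.ball (0:EucSp n) (r + s) := by
  intro x hx
  rw [mem_setOf_eq, stmt9_maxTrunc_indFun B s hh measurableSet_ball, lt_iSup_iff] at hx
  obtain ⟨R, hx⟩ := hx
  rw [lt_iSup_iff] at hx
  obtain ⟨⟨hRB, hRd⟩, hgt⟩ := hx
  obtain ⟨hxR, hRb, -, -⟩ := (hB x).1 R hRB
  have hne : volume (Metric.ball (0:EucSp n) r ∩ R) ≠ 0 := by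
    intro h0
    rw [h0, mul_zero, ENNReal.zero_div] at hgt
    exact absurd hgt (by simp)
  obtain ⟨y, hyV, hyR⟩ := nonempty_of_measure_ne_zero hne
  have h1 : dist x y ≤ Metric.diam R := Metric.dist_le_diam_of_mem hRb hxR hyR
  have h2 : dist y (0:EucSp n) < r := Metric.mem_ball.1 hyV
  have h3 := dist_triangle x y (0:EucSp n)
  rw [Metric.mem_ball]
  linarith

lemma stmt9_levelset_isOpen (B : BasisMap n) (hB : IsDiffBasis B) (hTI : IsTIBasis B)
    (s r : ℝ) {h : ℝ} (hh : 0 < h) :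
    IsOpen {x : EucSp n | 1 < maxTrunc B s (indFun (Metric.ball (0 : EucSp n) r) h) x} := by
  have hV : MeasurableSet (Metric.ball (0 : EucSp n) r) := measurableSet_ball
  rw [Metric.isOpen_iff]
  intro x₀ hx₀
  rw [mem_setOf_eq, stmt9_maxTrunc_indFun B s hh.le hV, lt_iSup_iff] at hx₀
  obtain ⟨R, hx₀R⟩ := hx₀
  rw [lt_iSup_iff] at hx₀R
  obtain ⟨⟨hRB, hRd⟩, hRgt⟩ := hx₀R
  obtain ⟨hxR, hRb, hRm, hRpos⟩ := (hB x₀).1 R hRB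
  have hRfin : volume R ≠ ⊤ :=
    ((measure_mono subset_closure).trans_lt hRb.isCompact_closure.measure_lt_top).ne
  have hab : volume (Metric.ball (0 : EucSp n) r ∩ R) ≤ volume R :=
    measure_mono inter_subset_right
  have hafin : volume (Metric.ball (0 : EucSp n) r ∩ R) ≠ ⊤ := (hab.trans_lt hRfin.lt_top).ne
  have hb : volume R < ENNReal.ofReal h * volume (Metric.ball (0 : EucSp n) r ∩ R) := by
    have := (ENNReal.lt_div_iff_mul_lt (Or.inl hRpos.ne') (Or.inl hRfin)).1 hRgt
    simpa using this
  set A := (volume (Metric.ball (0 : EucSp n) r ∩ R)).toReal with hA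
  set Bb := (volume R).toReal with hBb
  have hBbpos : 0 < Bb := ENNReal.toReal_pos hRpos.ne' hRfin
  have hreal : Bb < h * A := by
    have h1 : (volume R).toReal
        < (ENNReal.ofReal h * volume (Metric.ball (0 : EucSp n) r ∩ R)).toReal :=
      ENNReal.toReal_strict_mono (ENNReal.mul_ne_top ENNReal.ofReal_ne_top hafin) hb
    rwa [ENNReal.toReal_mul, ENNReal.toReal_ofReal hh.le] at h1
  set η := (h * A - Bb) / (2 * h) with hηdef
  have hηpos : 0 < η := div_pos (by linarith) (by linarith)
  obtain ⟨δ, hδ0, hT⟩ := stmt9_exists_translate_small R hRm hRfin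
      (η := ENNReal.ofReal η) (by rw [Ne, ENNReal.ofReal_eq_zero]; exact not_le.2 hηpos)
  refine ⟨δ, hδ0, fun x hx => ?_⟩
  rw [hTI x₀] at hRB
  obtain ⟨I, hI, hRI⟩ := hRB
  set v := x - x₀ with hvdef
  have hvnorm : ‖v‖ < δ := by
    rw [hvdef, ← dist_eq_norm]
    exact Metric.mem_ball.1 hx
  set R' := (fun y : EucSp n => v + y) '' R with hR'def
  have hR'mem : R' ∈ B x := by
    rw [hTI x]
    refine ⟨I, hI, ?_⟩
    have hfns : ((fun y : EucSp n => v + y) ∘ fun y : EucSp n => x₀ + y)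
        = (fun y : EucSp n => x + y) := by
      funext y
      show v + (x₀ + y) = x + y
      rw [hvdef]; abel
    rw [hR'def, ← hRI, ← Set.image_comp, hfns]
  have hR'diam : Metric.diam R' = Metric.diam R := (stmt9_isometry_addLeft v).diam_image R
  have hR'm : MeasurableSet R' := stmt9_meas_image_addLeft v hRm
  have hR'vol : volume R' = volume R := stmt9_vol_image_addLeft v hRm.nullMeasurableSet
  have hsplit : Metric.ball (0 : EucSp n) r ∩ R ⊆
      (Metric.ball (0 : EucSp n) r ∩ R') ∪ (R \ R') := by
    rintro y ⟨hyV, hyR⟩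
    by_cases hyR' : y ∈ R'
    · exact Or.inl ⟨hyV, hyR'⟩
    · exact Or.inr ⟨hyR, hyR'⟩
  have hdiff : volume (R \ R') ≤ ENNReal.ofReal η := by
    have hinj : Function.Injective (fun y : EucSp n => -v + y) := fun a b hab => by
      simpa using hab
    have him : (fun y : EucSp n => -v + y) '' (R \ R')
        = ((fun y : EucSp n => -v + y) '' R) \ R := by
      rw [Set.image_diff hinj]
      congr 1
      rw [hR'def, ← Set.image_comp]
      have : ((fun y : EucSp n => -v + y) ∘ fun y : EucSp n => v + y) = id := by
        funext y; simp
      rw [this, Set.image_id]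
    calc volume (R \ R') = volume ((fun y : EucSp n => -v + y) '' (R \ R')) :=
          (stmt9_vol_image_addLeft (-v) ((hRm.diff hR'm).nullMeasurableSet)).symm
      _ = volume (((fun y : EucSp n => -v + y) '' R) \ R) := by rw [him]
      _ ≤ ENNReal.ofReal η := hT (-v) (by simpa using hvnorm)
  have hlow : volume (Metric.ball (0 : EucSp n) r ∩ R)
      ≤ volume (Metric.ball (0 : EucSp n) r ∩ R') + ENNReal.ofReal η :=
    le_trans (le_trans (measure_mono hsplit) (measure_union_le _ _))
      (add_le_add le_rfl hdiff)
  have ha'fin : volume (Metric.ball (0 : EucSp n) r ∩ R') ≠ ⊤ :=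
    ((measure_mono inter_subset_right).trans_lt (hR'vol ▸ hRfin.lt_top)).ne
  set A' := (volume (Metric.ball (0 : EucSp n) r ∩ R')).toReal with hA'
  have hAA' : A ≤ A' + η := by
    have := (ENNReal.toReal_le_toReal hafin
      (ENNReal.add_ne_top.2 ⟨ha'fin, ENNReal.ofReal_ne_top⟩)).2 hlow
    rwa [ENNReal.toReal_add ha'fin ENNReal.ofReal_ne_top,
      ENNReal.toReal_ofReal hηpos.le] at this
  have hgoal_real : Bb < h * A' := by
    have hη2 : h * η = (h * A - Bb) / 2 := by
      rw [hηdef]; field_simp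
    nlinarith [mul_le_mul_of_nonneg_left hAA' hh.le]
  rw [mem_setOf_eq, stmt9_maxTrunc_indFun B s hh.le hV, lt_iSup_iff]
  refine ⟨R', ?_⟩
  rw [lt_iSup_iff]
  refine ⟨⟨hR'mem, hR'diam ▸ hRd⟩, ?_⟩
  rw [hR'vol, ENNReal.lt_div_iff_mul_lt (Or.inl hRpos.ne') (Or.inl hRfin), one_mul]
  have hA'nonneg : 0 ≤ A' := ENNReal.toReal_nonneg
  calc volume R = ENNReal.ofReal Bb := by rw [hBb, ENNReal.ofReal_toReal hRfin]
    _ < ENNReal.ofReal (h * A') := ENNReal.ofReal_lt_ofReal_iff (by nlinarith) |>.2 hgoal_real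
    _ = ENNReal.ofReal h * ENNReal.ofReal A' := ENNReal.ofReal_mul hh.le
    _ = ENNReal.ofReal h * volume (Metric.ball (0 : EucSp n) r ∩ R') := by
        rw [hA', ENNReal.ofReal_toReal ha'fin]

lemma stmt9_rot_term_eq (B : BasisMap n) (hB : IsDiffBasis B)
    (γ : EucSp n ≃ₗᵢ[ℝ] EucSp n) (x : EucSp n) (r : ℝ) {I : Set (EucSp n)} (hI : I ∈ B 0) :
    volume ((fun i : EucSp n => x + γ i) '' I)
        = volume ((fun i : EucSp n => γ.symm x + i) '' I) ∧
    Metric.diam ((fun i : EucSp n => x + γ i) '' I)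
        = Metric.diam ((fun i : EucSp n => γ.symm x + i) '' I) ∧
    volume (Metric.ball (0:EucSp n) r ∩ (fun i : EucSp n => x + γ i) '' I)
      = volume (Metric.ball (0:EucSp n) r ∩ (fun i : EucSp n => γ.symm x + i) '' I) := by
  obtain ⟨-, -, hIm, -⟩ := (hB 0).1 I hI
  have hcomp : (fun i : EucSp n => x + γ i) '' I = (fun y : EucSp n => x + y) '' (γ '' I) := by
    rw [← Set.image_comp]; rfl
  have hγIm : MeasurableSet (γ '' I) := stmt9_meas_image_rot γ hIm
  refine ⟨?_, ?_, ?_⟩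
  · rw [hcomp, stmt9_vol_image_addLeft x hγIm.nullMeasurableSet,
      stmt9_vol_image_rot γ hIm.nullMeasurableSet,
      stmt9_vol_image_addLeft _ hIm.nullMeasurableSet]
  · rw [hcomp, (stmt9_isometry_addLeft x).diam_image, γ.isometry.diam_image,
      (stmt9_isometry_addLeft (γ.symm x)).diam_image]
  · rw [hcomp, stmt9_vol_inter_image_addLeft x measurableSet_ball hγIm,
      stmt9_vol_inter_image_rot γ (stmt9_meas_image_addLeft (-x) measurableSet_ball) hIm,
      stmt9_vol_inter_image_addLeft (γ.symm x) measurableSet_ball hIm]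
    congr 2
    rw [stmt9_image_addLeft_ball, stmt9_image_addLeft_ball, stmt9_image_rot_ball]
    simp

lemma stmt9_maxTrunc_rotate (B : BasisMap n) (hB : IsDiffBasis B) (hTI : IsTIBasis B)
    (γ : EucSp n ≃ₗᵢ[ℝ] EucSp n) (s r : ℝ) {h : ℝ} (hh : 0 ≤ h) (x : EucSp n) :
    maxTrunc (rotateBasis B γ) s (indFun (Metric.ball (0:EucSp n) r) h) x
      = maxTrunc B s (indFun (Metric.ball (0:EucSp n) r) h) (γ.symm x) := by
  rw [stmt9_maxTrunc_indFun _ s hh measurableSet_ball,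
    stmt9_maxTrunc_indFun _ s hh measurableSet_ball]
  apply le_antisymm
  · refine iSup_le fun R' => iSup_le fun hR' => ?_
    obtain ⟨⟨R, hR, hR'eq⟩, hR'd⟩ := hR'
    rw [hTI x] at hR
    obtain ⟨I, hI, hRIeq⟩ := hR
    dsimp only at hR'eq hRIeq
    have hR'I : R' = (fun i : EucSp n => x + γ i) '' I := by
      rw [← hR'eq, ← hRIeq, ← Set.image_comp]
      have : ((fun y : EucSp n => x + γ (y - x)) ∘ fun y : EucSp n => x + y)
          = (fun i : EucSp n => x + γ i) := by
        funext i
        show x + γ (x + i - x) = x + γ i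
        rw [add_sub_cancel_left]
      rw [this]
    obtain ⟨hvol, hdiam, hint⟩ := stmt9_rot_term_eq B hB γ x r hI
    have hSmem : (fun i : EucSp n => γ.symm x + i) '' I ∈ B (γ.symm x) := by
      rw [hTI (γ.symm x)]; exact Set.mem_image_of_mem _ hI
    refine le_iSup₂_of_le ((fun i : EucSp n => γ.symm x + i) '' I)
      ⟨hSmem, by rw [← hdiam, ← hR'I]; exact hR'd⟩ ?_
    rw [hR'I, hvol, hint]
  · refine iSup_le fun S => iSup_le fun hS => ?_
    obtain ⟨hSB, hSd⟩ := hS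
    rw [hTI (γ.symm x)] at hSB
    obtain ⟨I, hI, hSIeq⟩ := hSB
    dsimp only at hSIeq
    obtain ⟨hvol, hdiam, hint⟩ := stmt9_rot_term_eq B hB γ x r hI
    have hR'mem : (fun i : EucSp n => x + γ i) '' I ∈ rotateBasis B γ x := by
      refine ⟨(fun y : EucSp n => x + y) '' I, ?_, ?_⟩
      · rw [hTI x]; exact Set.mem_image_of_mem _ hI
      · dsimp only
        rw [← Set.image_comp]
        have : ((fun y : EucSp n => x + γ (y - x)) ∘ fun y : EucSp n => x + y)
            = (fun i : EucSp n => x + γ i) := by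
          funext i
          show x + γ (x + i - x) = x + γ i
          rw [add_sub_cancel_left]
        rw [this]
    refine le_iSup₂_of_le ((fun i : EucSp n => x + γ i) '' I)
      ⟨hR'mem, by rw [hdiam, hSIeq]; exact hSd⟩ ?_
    rw [← hSIeq, ← hvol, ← hint]

lemma stmt9_levelset_rotate (B : BasisMap n) (hB : IsDiffBasis B) (hTI : IsTIBasis B)
    (γ : EucSp n ≃ₗᵢ[ℝ] EucSp n) (s r : ℝ) {h : ℝ} (hh : 0 ≤ h) :
    {x : EucSp n | 1 < maxTrunc (rotateBasis B γ) s (indFun (Metric.ball (0:EucSp n) r) h) x}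
      = γ '' {x : EucSp n | 1 < maxTrunc B s (indFun (Metric.ball (0:EucSp n) r) h) x} := by
  rw [stmt9_image_rot_eq_preimage]
  ext x
  simp only [mem_setOf_eq, mem_preimage]
  rw [stmt9_maxTrunc_rotate B hB hTI γ s r hh x]

lemma stmt9_norm_coord (x : EucSp n) (j : Fin n) : |x j| ≤ ‖x‖ := by
  rw [EuclideanSpace.norm_eq, ← Real.sqrt_sq (abs_nonneg (x j))]
  apply Real.sqrt_le_sqrt
  have h1 : |x j| ^ 2 = ‖x j‖ ^ 2 := by rw [Real.norm_eq_abs]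
  rw [h1]
  exact Finset.single_le_sum (fun i _ => sq_nonneg ‖x i‖) (Finset.mem_univ j)

lemma stmt9_cube_isOpen (a b : ℝ) : IsOpen {x : EucSp n | ∀ j, a < x j ∧ x j < b} := by
  have hrw : {x : EucSp n | ∀ j, a < x j ∧ x j < b}
      = ⋂ j, {x : EucSp n | a < x j ∧ x j < b} := by
    ext x; simp [Set.mem_iInter]
  rw [hrw]
  refine isOpen_iInter_of_finite fun j => ?_
  have hc : Continuous fun x : EucSp n => x j := by
    have := (PiLp.continuousLinearEquiv 2 ℝ (fun _ : Fin n => ℝ)).continuous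
    exact (continuous_apply j).comp this
  have : {x : EucSp n | a < x j ∧ x j < b} = (fun x : EucSp n => x j) ⁻¹' (Set.Ioo a b) := rfl
  rw [this]
  exact isOpen_Ioo.preimage hc

lemma stmt9_cube_norm_le {s' : ℝ} (hs' : 0 ≤ s') {x : EucSp n}
    (hx : ∀ j, -s' < x j ∧ x j < s') : ‖x‖ ≤ Real.sqrt n * s' := by
  rw [EuclideanSpace.norm_eq]
  have h1 : ∑ i, ‖x i‖ ^ 2 ≤ (n : ℝ) * s' ^ 2 := by
    calc ∑ i, ‖x i‖ ^ 2 ≤ ∑ _i : Fin n, s' ^ 2 := by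
          refine Finset.sum_le_sum fun i _ => ?_
          rw [Real.norm_eq_abs, sq_abs]
          exact sq_le_sq' (by linarith [(hx i).1]) (hx i).2.le
      _ = (n : ℝ) * s' ^ 2 := by
          rw [Finset.sum_const, Finset.card_univ, Fintype.card_fin, nsmul_eq_mul]
  calc Real.sqrt (∑ i, ‖x i‖ ^ 2) ≤ Real.sqrt ((n:ℝ) * s' ^ 2) := Real.sqrt_le_sqrt h1
    _ = Real.sqrt n * s' := by rw [Real.sqrt_mul (Nat.cast_nonneg n), Real.sqrt_sq hs']

lemma stmt9_cube_diam_le {s' : ℝ} (hs' : 0 ≤ s') :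
    Metric.diam {x : EucSp n | ∀ j, -s' < x j ∧ x j < s'} ≤ 2 * (Real.sqrt n * s') := by
  apply Metric.diam_le_of_forall_dist_le (by positivity)
  intro x hx y hy
  have h1 : dist x y ≤ ‖x‖ + ‖y‖ := by
    rw [dist_eq_norm]; exact norm_sub_le x y
  have h2 := stmt9_cube_norm_le hs' hx
  have h3 := stmt9_cube_norm_le hs' hy
  linarith

lemma stmt9_cube_volume (a b : ℝ) (hab : a ≤ b) :
    volume {x : EucSp n | ∀ j, a < x j ∧ x j < b} = ENNReal.ofReal ((b - a) ^ n) := by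
  have hpre : {x : EucSp n | ∀ j, a < x j ∧ x j < b}
      = (MeasurableEquiv.toLp 2 (Fin n → ℝ)).symm ⁻¹' (Set.univ.pi fun _ => Set.Ioo a b) := by
    ext x
    simp [Set.mem_pi]
  rw [hpre, (EuclideanSpace.volume_preserving_symm_measurableEquiv_toLp (Fin n)).measure_preimage
      ((MeasurableSet.univ_pi fun _ => measurableSet_Ioo).nullMeasurableSet)]
  rw [volume_pi_pi]
  simp only [Real.volume_Ioo]
  rw [Finset.prod_const, Finset.card_univ, Fintype.card_fin,
    ← ENNReal.ofReal_pow (by linarith : (0:ℝ) ≤ b - a)]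

lemma stmt9_hyperplane_null (j : Fin n) (c : ℝ) : volume {x : EucSp n | x j = c} = 0 := by
  classical
  set φ : EucSp n →ₗ[ℝ] ℝ :=
    (LinearMap.proj j).comp (WithLp.linearEquiv 2 ℝ (∀ _ : Fin n, ℝ)).toLinearMap with hφ
  have hφx : ∀ x : EucSp n, φ x = x j := fun x => rfl
  have hker : LinearMap.ker φ ≠ ⊤ := by
    intro htop
    have h1 : (EuclideanSpace.single j (1:ℝ) : EucSp n) ∈ LinearMap.ker φ := by
      rw [htop]; trivial
    rw [LinearMap.mem_ker, hφx] at h1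
    simp [EuclideanSpace.single_apply] at h1
  have h0 : volume ((LinearMap.ker φ : Submodule ℝ (EucSp n)) : Set (EucSp n)) = 0 :=
    Measure.addHaar_submodule volume _ hker
  have hset : {x : EucSp n | x j = c} =
      (fun y : EucSp n => EuclideanSpace.single j c + y)
        '' ((LinearMap.ker φ : Submodule ℝ (EucSp n)) : Set (EucSp n)) := by
    rw [stmt9_image_addLeft_eq_preimage]
    ext x
    simp only [mem_preimage, SetLike.mem_coe, LinearMap.mem_ker, hφx, mem_setOf_eq]
    have hval : (-EuclideanSpace.single j c + x) j = -c + x j := by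
      simp [EuclideanSpace.single_apply]
    rw [hval]
    constructor <;> intro hx <;> linarith
  rw [hset, stmt9_vol_image_addLeft _
    ((LinearMap.ker φ).closed_of_finiteDimensional.measurableSet.nullMeasurableSet), h0]

lemma stmt9_dyadic_dist_le {m : ℕ} {k : Fin n → ℤ} {w y : EucSp n}
    (hw : ∀ j, (k j : ℝ)/2^m < w j ∧ w j < ((k j : ℝ)+1)/2^m)
    (hy : ∀ j, (k j : ℝ)/2^m < y j ∧ y j < ((k j : ℝ)+1)/2^m) :
    dist w y ≤ Real.sqrt n / 2^m := by
  rw [EuclideanSpace.dist_eq]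
  have h2m : (0:ℝ) < 2^m := by positivity
  have h1 : ∑ i, dist (w i) (y i) ^ 2 ≤ (n : ℝ) * (1/2^m) ^ 2 := by
    calc ∑ i, dist (w i) (y i) ^ 2 ≤ ∑ _i : Fin n, (1/2^m : ℝ) ^ 2 := by
          refine Finset.sum_le_sum fun i _ => ?_
          rw [Real.dist_eq, sq_abs]
          have hgap : ((k i : ℝ)+1)/2^m - (k i : ℝ)/2^m = 1/2^m := by ring
          refine sq_le_sq' ?_ ?_
          · have := (hw i).1; have := (hy i).2; linarith
          · have := (hw i).2; have := (hy i).1; linarith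
      _ = (n : ℝ) * (1/2^m) ^ 2 := by
          rw [Finset.sum_const, Finset.card_univ, Fintype.card_fin, nsmul_eq_mul]
  calc Real.sqrt (∑ i, dist (w i) (y i) ^ 2) ≤ Real.sqrt ((n:ℝ) * (1/2^m) ^ 2) :=
        Real.sqrt_le_sqrt h1
    _ = Real.sqrt n * (1/2^m) := by
        rw [Real.sqrt_mul (Nat.cast_nonneg n), Real.sqrt_sq (by positivity)]
    _ = Real.sqrt n / 2^m := by ring

end Stmt9Aux

set_option maxHeartbeats 2000000 in
theorem stmt9 {n : ℕ} (hn : 2 ≤ n) (B : BasisMap n) (hB : IsDiffBasis B) (hTI : IsTIBasis B) :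
    MPhiProperty {B' | ∃ γ : EucSp n ≃ₗᵢ[ℝ] EucSp n, IsRotation γ ∧ B' = rotateBasis B γ}
      (fun h => (PhiB B h).toReal) := by
  classical
  have hj0 : (0:ℕ) < n := by omega
  haveI : Nontrivial (EucSp n) := by
    refine ⟨⟨EuclideanSpace.single ⟨0, hj0⟩ (1:ℝ), 0, fun hcon => ?_⟩⟩
    have h1 := congrArg (fun v : EucSp n => v ⟨0, hj0⟩) hcon
    simp [EuclideanSpace.single_apply] at h1
  have hωfin : volume (Metric.ball (0:EucSp n) 1) ≠ ⊤ := measure_ball_lt_top.ne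
  have hωpos : (0:ℝ) < (volume (Metric.ball (0:EucSp n) 1)).toReal :=
    ENNReal.toReal_pos (measure_ball_pos volume 0 one_pos).ne' hωfin
  set ω := (volume (Metric.ball (0:EucSp n) 1)).toReal with hω
  set T : ℝ → ℝ := fun h =>
    if H : ∃ t : ℝ, 1 ≤ t ∧ PhiB B h / 2 <
        Filter.limsup (fun r : ℝ =>
          volume {x : EucSp n | 1 < maxTrunc B (t * r)
            (indFun (Metric.ball (0 : EucSp n) r) h) x}
            / volume (Metric.ball (0 : EucSp n) r)) (𝓝[>] (0:ℝ))
    then H.choose else 1 with hT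
  have hT1 : ∀ h : ℝ, 1 ≤ T h := by
    intro h
    rw [hT]
    dsimp only
    by_cases H : ∃ t : ℝ, 1 ≤ t ∧ PhiB B h / 2 <
        Filter.limsup (fun r : ℝ =>
          volume {x : EucSp n | 1 < maxTrunc B (t * r)
            (indFun (Metric.ball (0 : EucSp n) r) h) x}
            / volume (Metric.ball (0 : EucSp n) r)) (𝓝[>] (0:ℝ))
    · rw [dif_pos H]
      exact H.choose_spec.1
    · rw [dif_neg H]
  have hTspec : ∀ h : ℝ,
      (∃ t : ℝ, 1 ≤ t ∧ PhiB B h / 2 <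
        Filter.limsup (fun r : ℝ =>
          volume {x : EucSp n | 1 < maxTrunc B (t * r)
            (indFun (Metric.ball (0 : EucSp n) r) h) x}
            / volume (Metric.ball (0 : EucSp n) r)) (𝓝[>] (0:ℝ))) →
      PhiB B h / 2 <
        Filter.limsup (fun r : ℝ =>
          volume {x : EucSp n | 1 < maxTrunc B (T h * r)
            (indFun (Metric.ball (0 : EucSp n) r) h) x}
            / volume (Metric.ball (0 : EucSp n) r)) (𝓝[>] (0:ℝ)) := by
    intro h H
    simp only [hT, dif_pos H]
    exact H.choose_spec.2
  set ch : ℝ → ℝ := fun h => min (1/2) (ω / (2*(1 + T h))^n) with hch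
  have hchpos : ∀ h : ℝ, 0 < ch h := by
    intro h
    rw [hch]
    exact lt_min (by norm_num) (div_pos hωpos (pow_pos (by linarith [hT1 h]) n))
  have hchhalf : ∀ h : ℝ, ch h ≤ 1/2 := fun h => by rw [hch]; exact min_le_left _ _
  refine ⟨1/4, by norm_num, ch,
    fun h _ => ⟨hchpos h, lt_of_le_of_lt (hchhalf h) (by norm_num)⟩, ?_⟩
  intro h hh1 ε hε
  by_cases HL : 0 < PhiB B h ∧ PhiB B h < ⊤
  · obtain ⟨hL0, hLtop⟩ := HL
    have hh0 : (0:ℝ) < h := lt_trans one_pos hh1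
    have hCond : ∃ t : ℝ, 1 ≤ t ∧ PhiB B h / 2 <
        Filter.limsup (fun r : ℝ =>
          volume {x : EucSp n | 1 < maxTrunc B (t * r)
            (indFun (Metric.ball (0 : EucSp n) r) h) x}
            / volume (Metric.ball (0 : EucSp n) r)) (𝓝[>] (0:ℝ)) := by
      have h2 : PhiB B h / 2 < PhiB B h := ENNReal.half_lt_self hL0.ne' hLtop.ne
      have hfreq : ∃ᶠ t in Filter.atTop, PhiB B h / 2 <
          Filter.limsup (fun r : ℝ =>
            volume {x : EucSp n | 1 < maxTrunc B (t * r)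
              (indFun (Metric.ball (0 : EucSp n) r) h) x}
              / volume (Metric.ball (0 : EucSp n) r)) (𝓝[>] (0:ℝ)) :=
        Filter.frequently_lt_of_lt_limsup Filter.isCobounded_le_of_bot h2
      obtain ⟨t, hts⟩ := (hfreq.and_eventually (Filter.eventually_ge_atTop 1)).exists
      exact ⟨t, hts.2, hts.1⟩
    have htL := hTspec h hCond
    have ht1 : (1:ℝ) ≤ T h := hT1 h
    have ht0 : (0:ℝ) < T h := lt_of_lt_of_le one_pos ht1
    have hs0 : (0:ℝ) ≤ Real.sqrt n := Real.sqrt_nonneg _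
    have hD : (0:ℝ) < 2 * (1 + T h) * (Real.sqrt n + 1) := by nlinarith
    set r₀ := ε / (2 * (1 + T h) * (Real.sqrt n + 1)) with hr₀def
    have hr₀pos : 0 < r₀ := div_pos hε hD
    have hfr2 : ∃ᶠ r in 𝓝[>] (0:ℝ), PhiB B h / 2 <
        volume {x : EucSp n | 1 < maxTrunc B (T h * r)
          (indFun (Metric.ball (0:EucSp n) r) h) x}
          / volume (Metric.ball (0:EucSp n) r) :=
      Filter.frequently_lt_of_lt_limsup Filter.isCobounded_le_of_bot htL
    have hev : ∀ᶠ r in 𝓝[>] (0:ℝ), r ∈ Set.Ioo (0:ℝ) r₀ := by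
      filter_upwards [Ioo_mem_nhdsGT_of_mem ⟨le_refl (0:ℝ), hr₀pos⟩] with rr hrr
      exact hrr
    obtain ⟨r, hrL, hr0, hrr₀⟩ : ∃ r : ℝ, (PhiB B h / 2 <
        volume {x : EucSp n | 1 < maxTrunc B (T h * r)
          (indFun (Metric.ball (0:EucSp n) r) h) x}
          / volume (Metric.ball (0:EucSp n) r)) ∧ 0 < r ∧ r < r₀ := by
      obtain ⟨r, h1, h2⟩ := (hfr2.and_eventually hev).exists
      exact ⟨r, h1, h2.1, h2.2⟩
    have hrD : r * (2 * (1 + T h) * (Real.sqrt n + 1)) < ε := by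
      rw [hr₀def] at hrr₀
      exact (lt_div_iff₀ hD).1 hrr₀
    have htrε : T h * r ≤ ε := by nlinarith
    have hVpos : 0 < volume (Metric.ball (0:EucSp n) r) := measure_ball_pos _ _ hr0
    have hVfin : volume (Metric.ball (0:EucSp n) r) ≠ ⊤ := measure_ball_lt_top.ne
    have hUlow : PhiB B h / 2 * volume (Metric.ball (0:EucSp n) r) ≤
        volume {x : EucSp n | 1 < maxTrunc B (T h * r)
          (indFun (Metric.ball (0:EucSp n) r) h) x} :=
      ((ENNReal.lt_div_iff_mul_lt (Or.inl hVpos.ne') (Or.inl hVfin)).1 hrL).le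
    set U := {x : EucSp n | 1 < maxTrunc B (T h * r)
      (indFun (Metric.ball (0:EucSp n) r) h) x} with hUdef
    have hUopen : IsOpen U := stmt9_levelset_isOpen B hB hTI (T h * r) r hh0
    have hUsub : U ⊆ Metric.ball (0:EucSp n) (r + T h * r) :=
      stmt9_levelset_subset_ball B hB (T h * r) r hh0.le
    have hUfin : volume U ≠ ⊤ := ((measure_mono hUsub).trans_lt measure_ball_lt_top).ne
    have hhalfne : PhiB B h / 2 ≠ 0 := by
      simp [ENNReal.div_eq_zero_iff, hL0.ne']
    have hUpos : 0 < volume U :=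
      lt_of_lt_of_le (ENNReal.mul_pos hhalfne hVpos.ne') hUlow
    obtain ⟨K, hKU, hKcomp, hKv⟩ :=
      hUopen.measurableSet.exists_lt_isCompact (ENNReal.half_lt_self hUpos.ne' hUfin)
    obtain ⟨δ, hδ0, hthick⟩ := hKcomp.exists_thickening_subset_open hUopen hKU
    obtain ⟨m, hm⟩ := pow_unbounded_of_one_lt (Real.sqrt n / δ) (one_lt_two : (1:ℝ) < 2)
    set P : BasisMap n → Set (EucSp n) := fun C =>
      ⋃₀ {S : Set (EucSp n) | S ∈ dyadicW (fun _ : Fin n => m) ∧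
        S ⊆ {x : EucSp n | 1 < maxTrunc C (T h * r)
          (indFun (Metric.ball (0:EucSp n) r) h) x}} with hPdef
    have hPsublev : ∀ C : BasisMap n, P C ⊆ {x : EucSp n | 1 < maxTrunc C (T h * r)
        (indFun (Metric.ball (0:EucSp n) r) h) x} := by
      intro C
      rw [hPdef]
      exact sUnion_subset fun S hS => hS.2
    refine ⟨Metric.ball (0:EucSp n) r, P,
      {x : EucSp n | ∀ j, -((1 + T h)*r) < x j ∧ x j < (1 + T h)*r},
      measurableSet_ball, hVpos,
      ⟨fun _ => -((1 + T h)*r), fun _ => (1 + T h)*r, rfl⟩,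
      ?_, ⟨fun _ => m, ?_⟩, ?_, ?_, ?_, ?_, ?_⟩
    · intro C _ x hx
      exact lt_of_lt_of_le (hPsublev C hx) (stmt9_maxTrunc_mono_trunc C htrε _ x)
    · intro C _
      rw [hPdef]
      exact ⟨_, fun S hS => hS.1, rfl⟩
    · rintro C ⟨γ, -, rfl⟩
      dsimp only
      have hlevγ : {x : EucSp n | 1 < maxTrunc (rotateBasis B γ) (T h * r)
          (indFun (Metric.ball (0:EucSp n) r) h) x} = γ '' U := by
        rw [hUdef]
        exact stmt9_levelset_rotate B hB hTI γ (T h * r) r hh0.le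
      set N := ⋃ (j : Fin n), ⋃ (k : ℤ), {x : EucSp n | x j = (k:ℝ)/2^m} with hNdef
      have hN : volume N = 0 :=
        measure_iUnion_null fun j => measure_iUnion_null fun k => stmt9_hyperplane_null j _
      have hsub : γ '' K \ N ⊆ P (rotateBasis B γ) := by
        rintro y ⟨⟨z, hzK, rfl⟩, hyN⟩
        have h2m : (0:ℝ) < 2^m := by positivity
        have hyS : ∀ j, ((⌊(γ z) j * 2^m⌋ : ℝ))/2^m < (γ z) j ∧
            (γ z) j < ((⌊(γ z) j * 2^m⌋ : ℝ)+1)/2^m := by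
          intro j
          have hne : (γ z) j ≠ ((⌊(γ z) j * 2^m⌋ : ℝ))/2^m := by
            intro hcon
            exact hyN (Set.mem_iUnion.2 ⟨j, Set.mem_iUnion.2 ⟨⌊(γ z) j * 2^m⌋, hcon⟩⟩)
          constructor
          · have hle : ((⌊(γ z) j * 2^m⌋ : ℝ)) ≤ (γ z) j * 2^m := Int.floor_le _
            have hle2 : ((⌊(γ z) j * 2^m⌋ : ℝ))/2^m ≤ (γ z) j := by
              rw [div_le_iff₀ h2m]; exact hle
            exact lt_of_le_of_ne hle2 (Ne.symm hne)
          · have hlt := Int.lt_floor_add_one ((γ z) j * 2^m)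
            rw [lt_div_iff₀ h2m]
            push_cast
            push_cast at hlt
            linarith
        rw [hPdef]
        refine Set.mem_sUnion.2 ⟨{x : EucSp n | ∀ j, ((⌊(γ z) j * 2^m⌋:ℝ))/2^m < x j ∧
            x j < ((⌊(γ z) j * 2^m⌋:ℝ)+1)/2^m}, ⟨⟨fun j => ⌊(γ z) j * 2^m⌋, rfl⟩, ?_⟩, hyS⟩
        intro w hw
        have hwmem : ∀ j, ((⌊(γ z) j * 2^m⌋:ℝ))/2^m < w j ∧
            w j < ((⌊(γ z) j * 2^m⌋:ℝ)+1)/2^m := hw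
        show w ∈ {x : EucSp n | 1 < maxTrunc (rotateBasis B γ) (T h * r)
          (indFun (Metric.ball (0:EucSp n) r) h) x}
        rw [hlevγ]
        have hdist : dist w (γ z) ≤ Real.sqrt n / 2^m := stmt9_dyadic_dist_le hwmem hyS
        have hδ' : dist (γ.symm w) z < δ := by
          have hd1 : dist (γ.symm w) z = dist w (γ z) := by
            conv_lhs => rw [show z = γ.symm (γ z) by simp]
            exact γ.symm.dist_map w (γ z)
          have hd2 : Real.sqrt n / 2^m < δ := by
            rw [div_lt_iff₀ h2m]
            have := (div_lt_iff₀ hδ0).1 hm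
            linarith
          rw [hd1]; linarith
        exact ⟨γ.symm w, hthick (Metric.mem_thickening_iff.2 ⟨z, hzK, hδ'⟩), by simp⟩
      have h2 : volume (γ '' K) = volume K :=
        stmt9_vol_image_rot γ hKcomp.measurableSet.nullMeasurableSet
      have h1 : volume K ≤ volume (P (rotateBasis B γ)) := by
        rw [← h2]
        calc volume (γ '' K) ≤ volume (γ '' K \ N) + volume N := by
              refine le_trans (measure_mono ?_) (measure_union_le _ _)
              intro y hy
              by_cases hyN : y ∈ N
              · exact Or.inr hyN
              · exact Or.inl ⟨hy, hyN⟩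
          _ = volume (γ '' K \ N) := by rw [hN, add_zero]
          _ ≤ volume (P (rotateBasis B γ)) := measure_mono hsub
      have hofReal : ENNReal.ofReal (1/4 * (PhiB B h).toReal) = PhiB B h / 4 := by
        rw [ENNReal.ofReal_mul (by norm_num : (0:ℝ) ≤ 1/4),
          ENNReal.ofReal_toReal hLtop.ne,
          show ENNReal.ofReal (1/4 : ℝ) = (4:ℝ≥0∞)⁻¹ by
            rw [show (1/4 : ℝ) = (4:ℝ)⁻¹ by norm_num,
              ENNReal.ofReal_inv_of_pos (by norm_num)]
            norm_num,
          ENNReal.div_eq_inv_mul]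
      rw [hofReal]
      have hstep : PhiB B h / 4 * volume (Metric.ball (0:EucSp n) r) ≤ volume K := by
        have e1 : PhiB B h / 2 * volume (Metric.ball (0:EucSp n) r) / 2 ≤ volume U / 2 :=
          ENNReal.div_le_div_right hUlow 2
        have heq : PhiB B h / 4 * volume (Metric.ball (0:EucSp n) r)
            = PhiB B h / 2 * volume (Metric.ball (0:EucSp n) r) / 2 := by
          rw [ENNReal.div_eq_inv_mul, ENNReal.div_eq_inv_mul, ENNReal.div_eq_inv_mul,
            show ((4:ℝ≥0∞))⁻¹ = 2⁻¹ * 2⁻¹ by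
              rw [← ENNReal.mul_inv (Or.inl (by norm_num)) (Or.inl (by norm_num))]
              norm_num]
          ring
        rw [heq]
        exact e1.trans hKv.le
      exact hstep.trans h1
    · intro x hx
      have hxn : ‖x‖ < r := by
        rw [← dist_zero_right]
        exact Metric.mem_ball.1 hx
      intro j
      have hc := stmt9_norm_coord x j
      have h3 : |x j| < (1 + T h) * r := by nlinarith
      exact abs_lt.1 h3
    · rintro C ⟨γ, -, rfl⟩
      have hlevγ : {x : EucSp n | 1 < maxTrunc (rotateBasis B γ) (T h * r)
          (indFun (Metric.ball (0:EucSp n) r) h) x} = γ '' U := by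
        rw [hUdef]
        exact stmt9_levelset_rotate B hB hTI γ (T h * r) r hh0.le
      refine (hPsublev _).trans ?_
      rw [hlevγ]
      rintro y ⟨u, hu, rfl⟩
      have h4 : γ u ∈ Metric.ball (0:EucSp n) (r + T h * r) := by
        have h5 := Set.mem_image_of_mem γ (hUsub hu)
        rwa [stmt9_image_rot_ball, map_zero] at h5
      have hxn : ‖γ u‖ < r + T h * r := by
        rw [← dist_zero_right]
        exact Metric.mem_ball.1 h4
      intro j
      have hc := stmt9_norm_coord (γ u) j
      have h3 : |(γ u) j| < (1 + T h) * r := by nlinarith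
      exact abs_lt.1 h3
    · calc Metric.diam {x : EucSp n | ∀ j, -((1 + T h)*r) < x j ∧ x j < (1 + T h)*r}
          ≤ 2 * (Real.sqrt n * ((1 + T h)*r)) := stmt9_cube_diam_le (by nlinarith)
        _ < ε := by nlinarith
    · have hQV : volume {x : EucSp n | ∀ j, -((1 + T h)*r) < x j ∧ x j < (1 + T h)*r}
          = ENNReal.ofReal ((2*(1 + T h)*r)^n) := by
        rw [stmt9_cube_volume _ _ (by nlinarith)]
        congr 1
        ring
      have hVV : volume (Metric.ball (0:EucSp n) r)
          = ENNReal.ofReal (r^n) * volume (Metric.ball (0:EucSp n) 1) := by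
        have h6 := Measure.addHaar_ball (volume : Measure (EucSp n)) (0:EucSp n) hr0.le
        simpa [finrank_euclideanSpace_fin] using h6
      have hchle : ch h ≤ ω / (2*(1 + T h))^n := by
        rw [hch]
        exact min_le_right _ _
      have hA : (0:ℝ) < (2*(1 + T h))^n := pow_pos (by linarith) n
      have hAne : ((2*(1 + T h))^n : ℝ) ≠ 0 := hA.ne'
      rw [hQV, hVV]
      calc ENNReal.ofReal (ch h) * ENNReal.ofReal ((2*(1 + T h)*r)^n)
          = ENNReal.ofReal (ch h * (2*(1 + T h)*r)^n) :=
            (ENNReal.ofReal_mul (hchpos h).le).symm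
        _ ≤ ENNReal.ofReal (ω * r^n) := by
            apply ENNReal.ofReal_le_ofReal
            have hXnn : (0:ℝ) ≤ (2*(1 + T h)*r)^n := pow_nonneg (by nlinarith) n
            calc ch h * (2*(1 + T h)*r)^n
                ≤ (ω / (2*(1 + T h))^n) * (2*(1 + T h)*r)^n :=
                  mul_le_mul_of_nonneg_right hchle hXnn
              _ = ω * r^n := by
                  have hexp : (2*(1 + T h)*r)^n = (2*(1 + T h))^n * r^n := mul_pow _ _ n
                  rw [hexp, ← mul_assoc, div_mul_cancel₀ _ hAne]
        _ = ENNReal.ofReal ω * ENNReal.ofReal (r^n) := ENNReal.ofReal_mul hωpos.le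
        _ = volume (Metric.ball (0:EucSp n) 1) * ENNReal.ofReal (r^n) := by
            rw [hω, ENNReal.ofReal_toReal hωfin]
        _ = ENNReal.ofReal (r^n) * volume (Metric.ball (0:EucSp n) 1) := mul_comm _ _
  · have hΦ0 : (PhiB B h).toReal = 0 := by
      rcases eq_or_ne (PhiB B h) 0 with hz | hz
      · simp [hz]
      · have htop : PhiB B h = ⊤ := by
          by_contra hne
          exact HL ⟨zero_lt_iff.mpr hz, lt_top_iff_ne_top.2 hne⟩
        simp [htop]
    set δ' := ε / (4 * (Real.sqrt n + 1)) with hδ'def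
    have hδ'pos : 0 < δ' := div_pos hε (by positivity)
    refine ⟨{x : EucSp n | ∀ j, -δ' < x j ∧ x j < δ'}, fun _ => ∅,
      {x : EucSp n | ∀ j, -δ' < x j ∧ x j < δ'},
      (stmt9_cube_isOpen _ _).measurableSet, ?_, ⟨fun _ => -δ', fun _ => δ', rfl⟩,
      fun _ _ => empty_subset _,
      ⟨fun _ => 0, fun _ _ => ⟨∅, empty_subset _, Set.sUnion_empty.symm⟩⟩,
      ?_, subset_rfl, fun _ _ => empty_subset _, ?_, ?_⟩
    · refine (stmt9_cube_isOpen _ _).measure_pos volume ⟨0, ?_⟩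
      have h0j : ∀ j : Fin n, (0 : EucSp n) j = 0 := fun j => rfl
      exact fun j => ⟨by rw [h0j]; linarith, by rw [h0j]; linarith⟩
    · intro C _
      simp [hΦ0]
    · calc Metric.diam {x : EucSp n | ∀ j, -δ' < x j ∧ x j < δ'}
          ≤ 2 * (Real.sqrt n * δ') := stmt9_cube_diam_le hδ'pos.le
        _ < ε := by
            rw [hδ'def,
              show 2 * (Real.sqrt n * (ε / (4 * (Real.sqrt n + 1))))
                = (2 * Real.sqrt n * ε) / (4 * (Real.sqrt n + 1)) by ring,
              div_lt_iff₀ (by positivity)]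
            nlinarith [Real.sqrt_nonneg (n:ℝ)]
    · have hle1 : ENNReal.ofReal (ch h) ≤ 1 :=
        ENNReal.ofReal_le_one.2 (le_trans (hchhalf h) (by norm_num))
      calc ENNReal.ofReal (ch h) * volume {x : EucSp n | ∀ j, -δ' < x j ∧ x j < δ'}
          ≤ 1 * volume {x : EucSp n | ∀ j, -δ' < x j ∧ x j < δ'} := mul_le_mul_left hle1 _
        _ = _ := one_mul _

end
end
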